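/- arXiv:2605.13025 — 4 statements merged into one kernel-verified Lean document; each statement's English description precedes it below -/
import Mathlib

section
/- Let A₁, A₂ be finite nonempty sets, Q : A₁ × A₂ → ℝ with max_{a₁,a₂} |Q(a₁,a₂)| ≤ B, η > 0, and π₁ʳᵉᶠ ∈ Δ(A₁), π₂ʳᵉᶠ ∈ Δ(A₂) strictly positive. Let (μ̂, ν̂) be the unique saddle point of the KL-regularized objective J_Q, and let (π₁⁽ᵗ⁾, π₂⁽ᵗ⁾) be the SOS-MD iterates with stepsizes γ_t = 2η/(t+2). Then for every T ≥ 1: KL(μ̂‖π₁⁽ᵀ⁾) + KL(ν̂‖π₂⁽ᵀ⁾) ≤ 36·η²·B² / (T+1). -/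
open Finset

/-- The probability simplex on a finite type: nonnegative entries summing to one. -/
def IsSimplex {A : Type*} [Fintype A] (p : A → ℝ) : Prop :=
  (∀ a, 0 ≤ p a) ∧ ∑ a, p a = 1

/-- KL divergence between two distributions on a finite type
(with the convention `0 * log 0 = 0`, which holds in Lean since `Real.log 0 = 0`). -/
noncomputable def KLdiv {A : Type*} [Fintype A] (p q : A → ℝ) : ℝ :=
  ∑ a, p a * Real.log (p a / q a)

/-- The KL-regularized zero-sum game objective. -/
noncomputable def J {A₁ A₂ : Type*} [Fintype A₁] [Fintype A₂]
    (G : A₁ × A₂ → ℝ) (η : ℝ) (π₁ref : A₁ → ℝ) (π₂ref : A₂ → ℝ)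
    (μ : A₁ → ℝ) (ν : A₂ → ℝ) : ℝ :=
  (∑ a₁, ∑ a₂, μ a₁ * ν a₂ * G (a₁, a₂))
    - η⁻¹ * KLdiv μ π₁ref + η⁻¹ * KLdiv ν π₂ref

/-- `(μs, νs)` is a saddle point of `J_G` over the product of simplices. -/
def IsSaddle {A₁ A₂ : Type*} [Fintype A₁] [Fintype A₂]
    (G : A₁ × A₂ → ℝ) (η : ℝ) (π₁ref : A₁ → ℝ) (π₂ref : A₂ → ℝ)
    (μs : A₁ → ℝ) (νs : A₂ → ℝ) : Prop :=
  IsSimplex μs ∧ IsSimplex νs ∧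
  (∀ μ : A₁ → ℝ, IsSimplex μ → J G η π₁ref π₂ref μ νs ≤ J G η π₁ref π₂ref μs νs) ∧
  (∀ ν : A₂ → ℝ, IsSimplex ν → J G η π₁ref π₂ref μs νs ≤ J G η π₁ref π₂ref μs ν)

/-- The SOS-MD self-play iterates: initialization at the reference policies and
normalized multiplicative (mirror-descent) updates with stepsizes `γ_t`. -/
def IsSOSMD {A₁ A₂ : Type*} [Fintype A₁] [Fintype A₂]
    (Q : A₁ × A₂ → ℝ) (η : ℝ) (π₁ref : A₁ → ℝ) (π₂ref : A₂ → ℝ)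
    (γ : ℕ → ℝ) (π₁ : ℕ → A₁ → ℝ) (π₂ : ℕ → A₂ → ℝ) : Prop :=
  π₁ 0 = π₁ref ∧ π₂ 0 = π₂ref ∧
  (∀ t : ℕ, ∀ a₁ : A₁, π₁ (t + 1) a₁
    = (π₁ t a₁ ^ (1 - γ t / η)
        * Real.exp (γ t * ∑ a₂, π₂ t a₂ * Q (a₁, a₂))
        * π₁ref a₁ ^ (γ t / η))
      / ∑ b₁, (π₁ t b₁ ^ (1 - γ t / η)
        * Real.exp (γ t * ∑ a₂, π₂ t a₂ * Q (b₁, a₂))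
        * π₁ref b₁ ^ (γ t / η))) ∧
  (∀ t : ℕ, ∀ a₂ : A₂, π₂ (t + 1) a₂
    = (π₂ t a₂ ^ (1 - γ t / η)
        * Real.exp (-(γ t) * ∑ a₁, π₁ t a₁ * Q (a₁, a₂))
        * π₂ref a₂ ^ (γ t / η))
      / ∑ b₂, (π₂ t b₂ ^ (1 - γ t / η)
        * Real.exp (-(γ t) * ∑ a₁, π₁ t a₁ * Q (a₁, b₂))
        * π₂ref b₂ ^ (γ t / η)))

/-- sinh s ≤ cosh s -/
lemma sinh_le_cosh' (s : ℝ) : Real.sinh s ≤ Real.cosh s := by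
  rw [Real.sinh_eq, Real.cosh_eq]
  have := Real.exp_pos (-s)
  linarith

lemma self_le_sinh' {s : ℝ} (hs : 0 ≤ s) : s ≤ Real.sinh s := by
  rcases eq_or_lt_of_le hs with h | h
  · simp [← h]
  · exact (Real.self_lt_sinh_iff.2 h).le

/-- sinh s ≤ s·exp(s²/2) for s ≥ 0. -/
lemma sinh_le_mul_exp {s : ℝ} (hs : 0 ≤ s) : Real.sinh s ≤ s * Real.exp (s^2/2) := by
  rcases le_or_gt s 1 with h1 | h1
  · -- use exp_bound with n = 3
    have habs : |s| ≤ 1 := by rw [abs_of_nonneg hs]; exact h1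
    have habs' : |(-s)| ≤ 1 := by rwa [abs_neg]
    have hb := Real.exp_bound habs (n := 3) (by norm_num)
    have hb' := Real.exp_bound habs' (n := 3) (by norm_num)
    rw [abs_of_nonneg hs] at hb
    rw [abs_neg, abs_of_nonneg hs] at hb'
    have hsum : ∑ i ∈ range 3, s ^ i / (Nat.factorial i) = 1 + s + s^2/2 := by
      rw [Finset.sum_range_succ, Finset.sum_range_succ, Finset.sum_range_succ,
        Finset.sum_range_zero]
      norm_num [Nat.factorial]
    have hsum' : ∑ i ∈ range 3, (-s) ^ i / (Nat.factorial i) = 1 - s + s^2/2 := by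
      rw [Finset.sum_range_succ, Finset.sum_range_succ, Finset.sum_range_succ,
        Finset.sum_range_zero]
      norm_num [Nat.factorial]; ring
    rw [hsum] at hb; rw [hsum'] at hb'
    norm_num [Nat.factorial] at hb hb'
    have e1 : Real.exp s ≤ 1 + s + s^2/2 + s^3 * (2/9) := by
      have h := abs_le.1 hb; nlinarith [h.2]
    have e2 : 1 - s + s^2/2 - s^3 * (2/9) ≤ Real.exp (-s) := by
      have h := abs_le.1 hb'; nlinarith [h.1]
    have hexp : 1 + s^2/2 ≤ Real.exp (s^2/2) := by
      have := Real.add_one_le_exp (s^2/2); linarith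
    rw [Real.sinh_eq]
    have hs3 : 0 ≤ s^3 := by positivity
    nlinarith [mul_le_mul_of_nonneg_left hexp hs]
  · calc Real.sinh s ≤ Real.cosh s := sinh_le_cosh' s
      _ ≤ Real.exp (s^2/2) := Real.cosh_le_exp_half_sq s
      _ = 1 * Real.exp (s^2/2) := (one_mul _).symm
      _ ≤ s * Real.exp (s^2/2) := by
          apply mul_le_mul_of_nonneg_right h1.le (Real.exp_pos _).le

/-- `1 - exp(-(s²/2)) ≤ (5/8)·s` for `s ≥ 0`. -/
lemma one_sub_exp_le {s : ℝ} (hs : 0 ≤ s) : 1 - Real.exp (-(s^2/2)) ≤ (5/8) * s := by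
  rcases le_or_gt s (5/4) with h1 | h1
  · have := Real.add_one_le_exp (-(s^2/2))
    nlinarith
  rcases le_or_gt (8/5) s with h2 | h2
  · have := (Real.exp_pos (-(s^2/2))).le
    nlinarith
  · -- 5/4 < s < 8/5
    have hq : Real.exp (-(s^2/2)) = Real.exp (-(s^2/4)) * Real.exp (-(s^2/4)) := by
      rw [← Real.exp_add]; ring_nf
    have hl : 1 - s^2/4 ≤ Real.exp (-(s^2/4)) := by
      have := Real.add_one_le_exp (-(s^2/4)); linarith
    have hnn : (0:ℝ) ≤ 1 - s^2/4 := by nlinarith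
    have hsq : (1 - s^2/4) * (1 - s^2/4) ≤ Real.exp (-(s^2/2)) := by
      rw [hq]; exact mul_le_mul hl hl hnn (Real.exp_pos _).le
    nlinarith [hsq, sq_nonneg (s - 5/4), sq_nonneg (s - 8/5)]

/-- Core scalar inequality: `s·cosh s + μ·sinh s ≤ s·exp(μ + (9/8)s²)` for `|μ| ≤ s`. -/
lemma core_scalar {s μ : ℝ} (hs : 0 ≤ s) (hm : |μ| ≤ s) :
    s * Real.cosh s + μ * Real.sinh s ≤ s * Real.exp (μ + (9/8) * s^2) := by
  rcases eq_or_lt_of_le hs with rfl | hs0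
  · have : μ = 0 := by rw [abs_le] at hm; linarith [hm.1, hm.2]
    simp [this]
  have hm1 := (abs_le.1 hm).1
  have hm2 := (abs_le.1 hm).2
  have hcosh := Real.cosh_le_exp_half_sq s
  rcases le_or_gt 0 μ with hμ | hμ
  · -- μ ≥ 0 case
    have h1 : Real.sinh s ≤ s * Real.exp (s^2/2) := sinh_le_mul_exp hs
    have h2 : μ * Real.sinh s ≤ μ * (s * Real.exp (s^2/2)) :=
      mul_le_mul_of_nonneg_left h1 hμ
    have h3 : (1 + μ) ≤ Real.exp μ := by have := Real.add_one_le_exp μ; linarith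
    have h4 : s * Real.exp (s^2/2) * (1 + μ) ≤ s * Real.exp (s^2/2) * Real.exp μ :=
      mul_le_mul_of_nonneg_left h3 (by positivity)
    have h5 : Real.exp (s^2/2) * Real.exp μ = Real.exp (μ + s^2/2) := by
      rw [← Real.exp_add]; ring_nf
    have h6 : Real.exp (μ + s^2/2) ≤ Real.exp (μ + (9/8)*s^2) := by
      apply Real.exp_le_exp.2; nlinarith
    calc s * Real.cosh s + μ * Real.sinh s
        ≤ s * Real.exp (s^2/2) + μ * (s * Real.exp (s^2/2)) := by
          have := mul_le_mul_of_nonneg_left hcosh hs; linarith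
      _ = s * Real.exp (s^2/2) * (1 + μ) := by ring
      _ ≤ s * Real.exp (s^2/2) * Real.exp μ := h4
      _ = s * Real.exp (μ + s^2/2) := by rw [mul_assoc, h5]
      _ ≤ s * Real.exp (μ + (9/8)*s^2) := mul_le_mul_of_nonneg_left h6 hs
  · -- μ < 0 case
    have hsinh : s ≤ Real.sinh s := self_le_sinh' hs
    have h1 : μ * Real.sinh s ≤ μ * s := by
      rw [mul_comm μ _, mul_comm μ s]
      exact mul_le_mul_of_nonpos_right hsinh hμ.le |>.trans_eq rfl
    -- main claim : exp(s²/2) + μ ≤ exp(μ + (9/8)s²)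
    have key : Real.exp (s^2/2) + μ ≤ Real.exp (μ + (9/8)*s^2) := by
      have hsplit : Real.exp (μ + (9/8)*s^2) = Real.exp (s^2/2) * Real.exp (μ + (5/8)*s^2) := by
        rw [← Real.exp_add]; ring_nf
      have hlin : 1 + (μ + (5/8)*s^2) ≤ Real.exp (μ + (5/8)*s^2) := by
        have := Real.add_one_le_exp (μ + (5/8)*s^2); linarith
      have hEpos : (0:ℝ) < Real.exp (s^2/2) := Real.exp_pos _
      -- suffices: (-μ)·(exp(s²/2) − 1) ≤ (5/8)·s²·exp(s²/2)
      have suff : (-μ) * (Real.exp (s^2/2) - 1) ≤ (5/8) * s^2 * Real.exp (s^2/2) := by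
        have hub : (-μ) * (Real.exp (s^2/2) - 1) ≤ s * (Real.exp (s^2/2) - 1) := by
          apply mul_le_mul_of_nonneg_right (by linarith)
          have := Real.add_one_le_exp (s^2/2); nlinarith
        refine hub.trans ?_
        have hone : Real.exp (s^2/2) * Real.exp (-(s^2/2)) = 1 := by
          rw [← Real.exp_add]; ring_nf; exact Real.exp_zero
        have h58 := one_sub_exp_le hs
        have hEpos' : (0:ℝ) < Real.exp (s^2/2) := Real.exp_pos _
        nlinarith [mul_le_mul_of_nonneg_left h58 (mul_pos hs0 hEpos').le]
      nlinarith [mul_le_mul_of_nonneg_left hlin hEpos.le]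
    calc s * Real.cosh s + μ * Real.sinh s
        ≤ s * Real.exp (s^2/2) + μ * s := by
          have := mul_le_mul_of_nonneg_left hcosh hs; linarith
      _ = s * (Real.exp (s^2/2) + μ) := by ring
      _ ≤ s * Real.exp (μ + (9/8)*s^2) := mul_le_mul_of_nonneg_left key hs

/-- chord inequality for exp on [-s,s] -/
lemma exp_chord {s x : ℝ} (hs : 0 < s) (hx : |x| ≤ s) :
    Real.exp x ≤ Real.cosh s + x * (Real.sinh s / s) := by
  have hx1 := (abs_le.1 hx).1
  have hx2 := (abs_le.1 hx).2
  have hl1 : (0:ℝ) ≤ (s - x) / (2*s) := by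
    apply div_nonneg (by linarith) (by linarith)
  have hl2 : (0:ℝ) ≤ (s + x) / (2*s) := by
    apply div_nonneg (by linarith) (by linarith)
  have hsum : (s - x)/(2*s) + (s + x)/(2*s) = 1 := by field_simp; ring
  have hcvx := convexOn_exp.2 (Set.mem_univ (-s)) (Set.mem_univ s) hl1 hl2 hsum
  simp only [smul_eq_mul] at hcvx
  have hpt : (s - x)/(2*s) * (-s) + (s + x)/(2*s) * s = x := by
    field_simp; ring
  rw [hpt] at hcvx
  refine hcvx.trans (le_of_eq ?_)
  rw [Real.cosh_eq, Real.sinh_eq]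
  field_simp
  ring

/-- Weighted log-sum-exp bound (Hoeffding-type, constant 9/32). -/
lemma lse_bound {A : Type*} [Fintype A] (w g : A → ℝ)
    (hw : ∀ a, 0 ≤ w a) (hw1 : ∑ a, w a = 1) (lo hi : ℝ)
    (hg : ∀ a, lo ≤ g a ∧ g a ≤ hi) :
    ∑ a, w a * Real.exp (g a) ≤ Real.exp ((∑ a, w a * g a) + (9/32)*(hi - lo)^2) := by
  have hne : Nonempty A := by
    by_contra h
    rw [not_nonempty_iff] at h
    rw [Finset.univ_eq_empty, Finset.sum_empty] at hw1
    norm_num at hw1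
  obtain ⟨a₀⟩ := hne
  have hlohi : lo ≤ hi := le_trans (hg a₀).1 (hg a₀).2
  set s := (hi - lo)/2 with hsdef
  set c := (hi + lo)/2 with hcdef
  have hs : 0 ≤ s := by rw [hsdef]; linarith
  have habs : ∀ a, |g a - c| ≤ s := by
    intro a
    rw [abs_le]
    have h1 := (hg a).1
    have h2 := (hg a).2
    constructor
    · rw [hsdef, hcdef]; linarith
    · rw [hsdef, hcdef]; linarith
  -- m = weighted mean of (g - c)
  set m := ∑ a, w a * (g a - c) with hmdef
  have hm : |m| ≤ s := by
    calc |m| ≤ ∑ a, |w a * (g a - c)| := Finset.abs_sum_le_sum_abs _ _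
      _ ≤ ∑ a, w a * s := by
          apply Finset.sum_le_sum
          intro a _
          rw [abs_mul, abs_of_nonneg (hw a)]
          exact mul_le_mul_of_nonneg_left (habs a) (hw a)
      _ = s := by rw [← Finset.sum_mul, hw1, one_mul]
  have hmg : m = (∑ a, w a * g a) - c := by
    rw [hmdef]
    have : ∀ a ∈ Finset.univ, w a * (g a - c) = w a * g a - w a * c :=
      fun a _ => by ring
    rw [Finset.sum_congr rfl this, Finset.sum_sub_distrib, ← Finset.sum_mul, hw1, one_mul]
  -- main chain
  rcases eq_or_lt_of_le hs with hseq | hspos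
  · -- s = 0 : all g a = c
    have hgc : ∀ a, g a = c := by
      intro a
      have h1 := habs a
      rw [← hseq] at h1
      have h2 : g a - c = 0 := abs_nonpos_iff.1 h1
      linarith
    have hL : ∑ a, w a * Real.exp (g a) = Real.exp c := by
      rw [Finset.sum_congr rfl (fun a _ => by rw [hgc a]), ← Finset.sum_mul, hw1, one_mul]
    have hR : ∑ a, w a * g a = c := by
      rw [Finset.sum_congr rfl (fun a _ => by rw [hgc a]), ← Finset.sum_mul, hw1, one_mul]
    rw [hL, hR]
    apply Real.exp_le_exp.2
    nlinarith [sq_nonneg (hi - lo)]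
  · -- s > 0
    have step1 : ∑ a, w a * Real.exp (g a)
        ≤ Real.exp c * (Real.cosh s + m * (Real.sinh s / s)) := by
      have hpt : ∀ a, w a * Real.exp (g a)
          ≤ w a * (Real.exp c * (Real.cosh s + (g a - c) * (Real.sinh s / s))) := by
        intro a
        apply mul_le_mul_of_nonneg_left _ (hw a)
        have := exp_chord hspos (habs a)
        calc Real.exp (g a) = Real.exp c * Real.exp (g a - c) := by
              rw [← Real.exp_add]; ring_nf
          _ ≤ Real.exp c * (Real.cosh s + (g a - c) * (Real.sinh s / s)) :=
              mul_le_mul_of_nonneg_left this (Real.exp_pos c).le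
      calc ∑ a, w a * Real.exp (g a)
          ≤ ∑ a, w a * (Real.exp c * (Real.cosh s + (g a - c) * (Real.sinh s / s))) :=
            Finset.sum_le_sum (fun a _ => hpt a)
        _ = Real.exp c * (Real.cosh s + m * (Real.sinh s / s)) := by
            rw [hmdef]
            rw [Finset.sum_congr rfl (fun a _ => show
              w a * (Real.exp c * (Real.cosh s + (g a - c) * (Real.sinh s / s)))
              = Real.exp c * Real.cosh s * w a
                + Real.exp c * (Real.sinh s / s) * (w a * (g a - c)) from by ring)]
            rw [Finset.sum_add_distrib, ← Finset.mul_sum, ← Finset.mul_sum, hw1]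
            ring
    have step2 : Real.cosh s + m * (Real.sinh s / s) ≤ Real.exp (m + (9/8)*s^2) := by
      have hcs := core_scalar hs hm
      have hexpand : s * (Real.cosh s + m * (Real.sinh s / s))
          = s * Real.cosh s + m * Real.sinh s := by
        field_simp
      have := hcs
      rw [← hexpand] at this
      exact le_of_mul_le_mul_left this hspos
    calc ∑ a, w a * Real.exp (g a)
        ≤ Real.exp c * (Real.cosh s + m * (Real.sinh s / s)) := step1
      _ ≤ Real.exp c * Real.exp (m + (9/8)*s^2) :=
          mul_le_mul_of_nonneg_left step2 (Real.exp_pos c).le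
      _ = Real.exp (c + (m + (9/8)*s^2)) := by rw [← Real.exp_add]
      _ = Real.exp ((∑ a, w a * g a) + (9/32)*(hi - lo)^2) := by
          rw [hmg, hsdef]; ring_nf

/-- pointwise Gibbs inequality -/
lemma pointwise_kl {p q : ℝ} (hp : 0 ≤ p) (hq : 0 < q) :
    p - q ≤ p * Real.log (p / q) := by
  rcases eq_or_lt_of_le hp with rfl | hp0
  · simp; exact hq.le
  · have hpq : 0 < q / p := by positivity
    have := Real.log_le_sub_one_of_pos hpq
    have hlog : Real.log (p / q) = - Real.log (q / p) := by
      rw [← Real.log_inv]; congr 1; field_simp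
    rw [hlog]
    have h2 : -(q/p - 1) ≤ - Real.log (q/p) := by linarith
    calc p - q = p * (-(q/p - 1)) := by field_simp; ring
      _ ≤ p * (- Real.log (q/p)) := mul_le_mul_of_nonneg_left h2 hp0.le
  
lemma kl_nonneg {A : Type*} [Fintype A] {p q : A → ℝ}
    (hp : IsSimplex p) (hq0 : ∀ a, 0 < q a) (hq1 : ∑ a, q a = 1) :
    0 ≤ KLdiv p q := by
  have h : ∀ a ∈ Finset.univ, p a - q a ≤ p a * Real.log (p a / q a) :=
    fun a _ => pointwise_kl (hp.1 a) (hq0 a)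
  have := Finset.sum_le_sum h
  rw [Finset.sum_sub_distrib, hp.2, hq1] at this
  simpa [KLdiv] using this

lemma kl_eq_zero_iff {A : Type*} [Fintype A] {p q : A → ℝ}
    (hp : IsSimplex p) (hq0 : ∀ a, 0 < q a) (hq1 : ∑ a, q a = 1)
    (h : KLdiv p q ≤ 0) : p = q := by
  -- each term equals p a - q a
  have hterm : ∀ a ∈ Finset.univ, p a - q a ≤ p a * Real.log (p a / q a) :=
    fun a _ => pointwise_kl (hp.1 a) (hq0 a)
  have hsum0 : ∑ a, (p a * Real.log (p a / q a) - (p a - q a)) ≤ 0 := by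
    rw [Finset.sum_sub_distrib, Finset.sum_sub_distrib, hp.2, hq1]
    simpa [KLdiv] using h
  have hall : ∀ a ∈ Finset.univ, p a * Real.log (p a / q a) - (p a - q a) = 0 := by
    intro a ha
    have hnn : ∀ b ∈ Finset.univ, 0 ≤ p b * Real.log (p b / q b) - (p b - q b) :=
      fun b hb => by linarith [hterm b hb]
    have := Finset.sum_nonneg hnn
    have heq : ∑ a, (p a * Real.log (p a / q a) - (p a - q a)) = 0 := le_antisymm hsum0 this
    exact (Finset.sum_eq_zero_iff_of_nonneg hnn).1 heq a ha
  funext a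
  have heq := hall a (Finset.mem_univ a)
  by_contra hne
  rcases eq_or_lt_of_le (hp.1 a) with hpz | hppos
  · -- p a = 0 : then 0 - (0 - q a) = q a = 0 contradiction
    rw [← hpz] at heq
    simp at heq
    exact (hq0 a).ne' (by linarith)
  · have hx : 0 < q a / p a := div_pos (hq0 a) hppos
    have hxne : q a / p a ≠ 1 := by
      intro hcontra
      apply hne
      field_simp at hcontra
      linarith
    have hstrict := Real.log_lt_sub_one_of_pos hx hxne
    have hlog : Real.log (p a / q a) = - Real.log (q a / p a) := by
      rw [← Real.log_inv]; congr 1; field_simp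
    rw [hlog] at heq
    have : p a * (-Real.log (q a / p a)) = p a - q a := by linarith
    have h2 : p a * (q a / p a - 1) = q a - p a := by field_simp
    nlinarith [mul_lt_mul_of_pos_left hstrict hppos]

/-- Positivity of partition function -/
lemma Zpos {A : Type*} [Fintype A] [Nonempty A] {π : A → ℝ} (hπ : ∀ a, 0 < π a)
    (g : A → ℝ) : 0 < ∑ b, π b * Real.exp (g b) :=
  Finset.sum_pos (fun b _ => mul_pos (hπ b) (Real.exp_pos _)) univ_nonempty

/-- tilted distribution is a positive simplex -/
lemma tilt_simplex {A : Type*} [Fintype A] [Nonempty A] {π : A → ℝ} (hπ : ∀ a, 0 < π a)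
    (g : A → ℝ) :
    (∀ a, 0 < π a * Real.exp (g a) / (∑ b, π b * Real.exp (g b))) ∧
    IsSimplex (fun a => π a * Real.exp (g a) / (∑ b, π b * Real.exp (g b))) := by
  have hZ := Zpos hπ g
  constructor
  · intro a; exact div_pos (mul_pos (hπ a) (Real.exp_pos _)) hZ
  constructor
  · intro a; exact (div_pos (mul_pos (hπ a) (Real.exp_pos _)) hZ).le
  · rw [← Finset.sum_div, div_self hZ.ne']

/-- KL divergence against a tilted distribution. -/
lemma tilt_kl {A : Type*} [Fintype A] {π : A → ℝ} (hπ : ∀ a, 0 < π a) (g : A → ℝ)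
    {μ : A → ℝ} (hμ : IsSimplex μ) :
    KLdiv μ (fun a => π a * Real.exp (g a) / (∑ b, π b * Real.exp (g b)))
      = KLdiv μ π - (∑ a, μ a * g a) + Real.log (∑ b, π b * Real.exp (g b)) := by
  have hne : Nonempty A := by
    by_contra h
    rw [not_nonempty_iff] at h
    have := hμ.2
    rw [Finset.univ_eq_empty, Finset.sum_empty] at this
    norm_num at this
  have hZ := Zpos hπ g
  have hpt : ∀ a ∈ Finset.univ,
      μ a * Real.log (μ a / (π a * Real.exp (g a) / (∑ b, π b * Real.exp (g b))))
      = μ a * Real.log (μ a / π a) - μ a * g a + μ a * Real.log (∑ b, π b * Real.exp (g b)) := by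
    intro a _
    rcases eq_or_lt_of_le (hμ.1 a) with hz | hpos
    · rw [← hz]; simp
    · have hd : 0 < π a * Real.exp (g a) / (∑ b, π b * Real.exp (g b)) :=
        div_pos (mul_pos (hπ a) (Real.exp_pos _)) hZ
      rw [Real.log_div hpos.ne' hd.ne', Real.log_div hpos.ne' (hπ a).ne',
        Real.log_div (mul_pos (hπ a) (Real.exp_pos _)).ne' hZ.ne',
        Real.log_mul (hπ a).ne' (Real.exp_pos _).ne', Real.log_exp]
      ring
  unfold KLdiv
  rw [Finset.sum_congr rfl hpt]
  rw [Finset.sum_add_distrib, Finset.sum_sub_distrib, ← Finset.sum_mul, hμ.2, one_mul]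

lemma kl_self {A : Type*} [Fintype A] {p : A → ℝ} (hp : ∀ a, 0 < p a) : KLdiv p p = 0 := by
  unfold KLdiv
  apply Finset.sum_eq_zero
  intro a _
  rw [div_self (hp a).ne', Real.log_one, mul_zero]

lemma bilinear_row {A₁ A₂ : Type*} [Fintype A₁] [Fintype A₂]
    (G : A₁ × A₂ → ℝ) (μ : A₁ → ℝ) (ν : A₂ → ℝ) :
    ∑ a₁, ∑ a₂, μ a₁ * ν a₂ * G (a₁, a₂) = ∑ a₁, μ a₁ * (∑ a₂, ν a₂ * G (a₁, a₂)) := by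
  apply Finset.sum_congr rfl
  intro a _
  rw [Finset.mul_sum]
  apply Finset.sum_congr rfl
  intro b _
  ring

lemma bilinear_col {A₁ A₂ : Type*} [Fintype A₁] [Fintype A₂]
    (G : A₁ × A₂ → ℝ) (μ : A₁ → ℝ) (ν : A₂ → ℝ) :
    ∑ a₁, ∑ a₂, μ a₁ * ν a₂ * G (a₁, a₂) = ∑ a₂, ν a₂ * (∑ a₁, μ a₁ * G (a₁, a₂)) := by
  rw [Finset.sum_comm]
  apply Finset.sum_congr rfl
  intro b _
  rw [Finset.mul_sum]
  apply Finset.sum_congr rfl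
  intro a _
  ring

lemma saddle_char₁ {A₁ A₂ : Type*} [Fintype A₁] [Fintype A₂] [Nonempty A₁]
    (Q : A₁ × A₂ → ℝ) {η : ℝ} (hη : 0 < η)
    {π₁ref : A₁ → ℝ} {π₂ref : A₂ → ℝ} (h₁pos : ∀ a, 0 < π₁ref a)
    {μhat : A₁ → ℝ} {νhat : A₂ → ℝ}
    (hs : IsSaddle Q η π₁ref π₂ref μhat νhat) :
    μhat = fun a => π₁ref a * Real.exp (η * ∑ b, νhat b * Q (a, b))
      / (∑ a', π₁ref a' * Real.exp (η * ∑ b, νhat b * Q (a', b))) := by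
  obtain ⟨hμs, hνs, hmax, _⟩ := hs
  set g1 : A₁ → ℝ := fun a => η * ∑ b, νhat b * Q (a, b) with hg1
  set gb : A₁ → ℝ := fun a => π₁ref a * Real.exp (g1 a)
      / (∑ a', π₁ref a' * Real.exp (g1 a')) with hgb
  obtain ⟨hgbpos, hgbsim⟩ := tilt_simplex h₁pos g1
  -- J μ νhat in terms of KL to gibbs
  have hJ : ∀ μ : A₁ → ℝ, IsSimplex μ → J Q η π₁ref π₂ref μ νhat
      = η⁻¹ * (Real.log (∑ a', π₁ref a' * Real.exp (g1 a')) - KLdiv μ gb)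
        + η⁻¹ * KLdiv νhat π₂ref := by
    intro μ hμ
    have htilt := tilt_kl h₁pos g1 hμ
    have hrow := bilinear_row Q μ νhat
    have hdd : ∑ a, μ a * g1 a = η * ∑ a, μ a * (∑ b, νhat b * Q (a, b)) := by
      rw [Finset.mul_sum]
      apply Finset.sum_congr rfl
      intro a _
      rw [hg1]; ring
    unfold J
    rw [hrow]
    have : KLdiv μ gb = KLdiv μ π₁ref - (∑ a, μ a * g1 a)
        + Real.log (∑ a', π₁ref a' * Real.exp (g1 a')) := htilt
    rw [this, hdd]
    field_simp
    ring
  have hineq := hmax gb hgbsim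
  rw [hJ gb hgbsim, hJ μhat hμs, kl_self hgbpos] at hineq
  have hKL : KLdiv μhat gb ≤ 0 := by
    have hinv : 0 < η⁻¹ := inv_pos.2 hη
    nlinarith [hineq]
  exact kl_eq_zero_iff hμs hgbpos hgbsim.2 hKL

lemma saddle_char₂ {A₁ A₂ : Type*} [Fintype A₁] [Fintype A₂] [Nonempty A₂]
    (Q : A₁ × A₂ → ℝ) {η : ℝ} (hη : 0 < η)
    {π₁ref : A₁ → ℝ} {π₂ref : A₂ → ℝ} (h₂pos : ∀ a, 0 < π₂ref a)
    {μhat : A₁ → ℝ} {νhat : A₂ → ℝ}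
    (hs : IsSaddle Q η π₁ref π₂ref μhat νhat) :
    νhat = fun b => π₂ref b * Real.exp (-η * ∑ a, μhat a * Q (a, b))
      / (∑ b', π₂ref b' * Real.exp (-η * ∑ a, μhat a * Q (a, b'))) := by
  obtain ⟨hμs, hνs, _, hmin⟩ := hs
  set g2 : A₂ → ℝ := fun b => -η * ∑ a, μhat a * Q (a, b) with hg2
  set gb : A₂ → ℝ := fun b => π₂ref b * Real.exp (g2 b)
      / (∑ b', π₂ref b' * Real.exp (g2 b')) with hgb
  obtain ⟨hgbpos, hgbsim⟩ := tilt_simplex h₂pos g2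
  have hJ : ∀ ν : A₂ → ℝ, IsSimplex ν → J Q η π₁ref π₂ref μhat ν
      = -(η⁻¹ * (Real.log (∑ b', π₂ref b' * Real.exp (g2 b')) - KLdiv ν gb))
        - η⁻¹ * KLdiv μhat π₁ref := by
    intro ν hν
    have htilt := tilt_kl h₂pos g2 hν
    have hcol := bilinear_col Q μhat ν
    have hdd : ∑ b, ν b * g2 b = -η * ∑ b, ν b * (∑ a, μhat a * Q (a, b)) := by
      rw [Finset.mul_sum]
      apply Finset.sum_congr rfl
      intro b _
      rw [hg2]; ring
    unfold J
    rw [hcol]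
    have : KLdiv ν gb = KLdiv ν π₂ref - (∑ b, ν b * g2 b)
        + Real.log (∑ b', π₂ref b' * Real.exp (g2 b')) := htilt
    rw [this, hdd]
    field_simp
    ring
  have hineq := hmin gb hgbsim
  rw [hJ gb hgbsim, hJ νhat hνs, kl_self hgbpos] at hineq
  have hKL : KLdiv νhat gb ≤ 0 := by
    have hinv : 0 < η⁻¹ := inv_pos.2 hη
    nlinarith [hineq]
  exact kl_eq_zero_iff hνs hgbpos hgbsim.2 hKL

/-- One mirror-descent step bound. -/
lemma md_step {A : Type*} [Fintype A] [Nonempty A] {π : A → ℝ}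
    (hπpos : ∀ a, 0 < π a) (hπ1 : ∑ a, π a = 1) {μ : A → ℝ} (hμ : IsSimplex μ)
    (G : A → ℝ) (lo hi : ℝ) (hG : ∀ a, lo ≤ G a ∧ G a ≤ hi) :
    KLdiv μ (fun a => π a * Real.exp (G a) / (∑ b, π b * Real.exp (G b)))
      ≤ KLdiv μ π - (∑ a, (μ a - π a) * G a) + (9/32)*(hi - lo)^2 := by
  rw [tilt_kl hπpos G hμ]
  have hlse := lse_bound π G (fun a => (hπpos a).le) hπ1 lo hi hG
  have hZ := Zpos hπpos G
  have hlog : Real.log (∑ b, π b * Real.exp (G b))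
      ≤ (∑ a, π a * G a) + (9/32)*(hi - lo)^2 := by
    calc Real.log (∑ b, π b * Real.exp (G b))
        ≤ Real.log (Real.exp ((∑ a, π a * G a) + (9/32)*(hi - lo)^2)) :=
          Real.log_le_log hZ hlse
      _ = (∑ a, π a * G a) + (9/32)*(hi - lo)^2 := Real.log_exp _
  have hsub : ∑ a, (μ a - π a) * G a = (∑ a, μ a * G a) - ∑ a, π a * G a := by
    rw [← Finset.sum_sub_distrib]
    exact Finset.sum_congr rfl (fun a _ => by ring)
  linarith

lemma subsplit {A : Type*} [Fintype A] (f g h : A → ℝ) :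
    ∑ x, (f x - g x) * h x = (∑ x, f x * h x) - ∑ x, g x * h x := by
  rw [← Finset.sum_sub_distrib]
  exact Finset.sum_congr rfl (fun x _ => by ring)

/-- The strong monotonicity inequality at the saddle point. -/
lemma mono_ineq {A₁ A₂ : Type*} [Fintype A₁] [Fintype A₂]
    (Q : A₁ × A₂ → ℝ) {η : ℝ} (hη : 0 < η)
    {π₁ref : A₁ → ℝ} {π₂ref : A₂ → ℝ}
    {μhat : A₁ → ℝ} {νhat : A₂ → ℝ} {π₁ : A₁ → ℝ} {π₂ : A₂ → ℝ}
    (hμpos : ∀ a, 0 < μhat a) (hμ1 : ∑ a, μhat a = 1)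
    (hνpos : ∀ b, 0 < νhat b) (hν1 : ∑ b, νhat b = 1)
    (hπ₁pos : ∀ a, 0 < π₁ a) (hπ₁1 : ∑ a, π₁ a = 1)
    (hπ₂pos : ∀ b, 0 < π₂ b) (hπ₂1 : ∑ b, π₂ b = 1)
    (c₁ c₂ : ℝ)
    (hμchar : ∀ a, Real.log (μhat a / π₁ref a) = η * (∑ b, νhat b * Q (a, b)) - c₁)
    (hνchar : ∀ b, Real.log (νhat b / π₂ref b) = -η * (∑ a, μhat a * Q (a, b)) - c₂)
    (h₁pos : ∀ a, 0 < π₁ref a) (h₂pos : ∀ b, 0 < π₂ref b) :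
    η⁻¹ * (KLdiv μhat π₁ + KLdiv νhat π₂)
      ≤ (∑ a, (μhat a - π₁ a) * ((∑ b, π₂ b * Q (a, b))
            - η⁻¹ * Real.log (π₁ a / π₁ref a)))
        + (∑ b, (νhat b - π₂ b) * (-(∑ a, π₁ a * Q (a, b))
            - η⁻¹ * Real.log (π₂ b / π₂ref b))) := by
  -- decompose log ratios
  have hlr₁ : ∀ a, η⁻¹ * Real.log (π₁ a / π₁ref a)
      = η⁻¹ * Real.log (π₁ a / μhat a) + (∑ b, νhat b * Q (a, b)) - η⁻¹ * c₁ := by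
    intro a
    have hsplit : Real.log (π₁ a / π₁ref a)
        = Real.log (π₁ a / μhat a) + Real.log (μhat a / π₁ref a) := by
      rw [Real.log_div (hπ₁pos a).ne' (h₁pos a).ne',
          Real.log_div (hπ₁pos a).ne' (hμpos a).ne',
          Real.log_div (hμpos a).ne' (h₁pos a).ne']
      ring
    rw [hsplit, hμchar a, mul_add, mul_sub, ← mul_assoc, inv_mul_cancel₀ hη.ne', one_mul]
    ring
  have hlr₂ : ∀ b, η⁻¹ * Real.log (π₂ b / π₂ref b)
      = η⁻¹ * Real.log (π₂ b / νhat b) - (∑ a, μhat a * Q (a, b)) - η⁻¹ * c₂ := by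
    intro b
    have hsplit : Real.log (π₂ b / π₂ref b)
        = Real.log (π₂ b / νhat b) + Real.log (νhat b / π₂ref b) := by
      rw [Real.log_div (hπ₂pos b).ne' (h₂pos b).ne',
          Real.log_div (hπ₂pos b).ne' (hνpos b).ne',
          Real.log_div (hνpos b).ne' (h₂pos b).ne']
      ring
    rw [hsplit, hνchar b, mul_add, mul_sub, neg_mul, mul_neg, ← mul_assoc,
      inv_mul_cancel₀ hη.ne', one_mul]
    ring
  -- first sum decomposition
  have hS₁ : ∑ a, (μhat a - π₁ a) * ((∑ b, π₂ b * Q (a, b))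
          - η⁻¹ * Real.log (π₁ a / π₁ref a))
      = (∑ a, (μhat a - π₁ a) * (∑ b, π₂ b * Q (a, b)))
        - η⁻¹ * (∑ a, (μhat a - π₁ a) * Real.log (π₁ a / μhat a))
        - (∑ a, (μhat a - π₁ a) * (∑ b, νhat b * Q (a, b)))
        + η⁻¹ * c₁ * (∑ a, (μhat a - π₁ a)) := by
    have expand : ∀ a ∈ Finset.univ, (μhat a - π₁ a) * ((∑ b, π₂ b * Q (a, b))
          - η⁻¹ * Real.log (π₁ a / π₁ref a))
        = (μhat a - π₁ a) * (∑ b, π₂ b * Q (a, b))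
          - η⁻¹ * ((μhat a - π₁ a) * Real.log (π₁ a / μhat a))
          - (μhat a - π₁ a) * (∑ b, νhat b * Q (a, b))
          + η⁻¹ * c₁ * (μhat a - π₁ a) := by
      intro a _
      rw [hlr₁ a]
      ring
    rw [Finset.sum_congr rfl expand, Finset.sum_add_distrib, Finset.sum_sub_distrib,
      Finset.sum_sub_distrib, ← Finset.mul_sum, ← Finset.mul_sum]
  have hS₂ : ∑ b, (νhat b - π₂ b) * (-(∑ a, π₁ a * Q (a, b))
          - η⁻¹ * Real.log (π₂ b / π₂ref b))
      = -(∑ b, (νhat b - π₂ b) * (∑ a, π₁ a * Q (a, b)))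
        - η⁻¹ * (∑ b, (νhat b - π₂ b) * Real.log (π₂ b / νhat b))
        + (∑ b, (νhat b - π₂ b) * (∑ a, μhat a * Q (a, b)))
        + η⁻¹ * c₂ * (∑ b, (νhat b - π₂ b)) := by
    have expand : ∀ b ∈ Finset.univ, (νhat b - π₂ b) * (-(∑ a, π₁ a * Q (a, b))
          - η⁻¹ * Real.log (π₂ b / π₂ref b))
        = -((νhat b - π₂ b) * (∑ a, π₁ a * Q (a, b)))
          - η⁻¹ * ((νhat b - π₂ b) * Real.log (π₂ b / νhat b))
          + (νhat b - π₂ b) * (∑ a, μhat a * Q (a, b))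
          + η⁻¹ * c₂ * (νhat b - π₂ b) := by
      intro b _
      rw [hlr₂ b]
      ring
    rw [Finset.sum_congr rfl expand, Finset.sum_add_distrib, Finset.sum_add_distrib,
      Finset.sum_sub_distrib, Finset.sum_neg_distrib, ← Finset.mul_sum, ← Finset.mul_sum]
  have swap : ∀ (m : A₁ → ℝ) (ν : A₂ → ℝ),
      ∑ b, ν b * (∑ a, m a * Q (a, b)) = ∑ a, m a * (∑ b, ν b * Q (a, b)) := by
    intro m ν
    calc ∑ b, ν b * (∑ a, m a * Q (a, b))
        = ∑ b, ∑ a, ν b * (m a * Q (a, b)) :=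
          Finset.sum_congr rfl (fun b _ => Finset.mul_sum _ _ _)
      _ = ∑ a, ∑ b, ν b * (m a * Q (a, b)) := Finset.sum_comm
      _ = ∑ a, m a * (∑ b, ν b * Q (a, b)) := by
          apply Finset.sum_congr rfl
          intro a _
          rw [Finset.mul_sum]
          exact Finset.sum_congr rfl (fun b _ => by ring)
  have hdiff₁ : ∑ a, (μhat a - π₁ a) = 0 := by
    rw [Finset.sum_sub_distrib, hμ1, hπ₁1, sub_self]
  have hdiff₂ : ∑ b, (νhat b - π₂ b) = 0 := by
    rw [Finset.sum_sub_distrib, hν1, hπ₂1, sub_self]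
  have hI6 : ∑ a, (μhat a - π₁ a) * Real.log (π₁ a / μhat a)
      = -(KLdiv μhat π₁) - KLdiv π₁ μhat := by
    have hpt : ∀ a ∈ Finset.univ, (μhat a - π₁ a) * Real.log (π₁ a / μhat a)
        = -(μhat a * Real.log (μhat a / π₁ a)) - π₁ a * Real.log (π₁ a / μhat a) := by
      intro a _
      rw [Real.log_div (hπ₁pos a).ne' (hμpos a).ne',
        Real.log_div (hμpos a).ne' (hπ₁pos a).ne']
      ring
    rw [Finset.sum_congr rfl hpt, Finset.sum_sub_distrib, Finset.sum_neg_distrib]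
    rfl
  have hI7 : ∑ b, (νhat b - π₂ b) * Real.log (π₂ b / νhat b)
      = -(KLdiv νhat π₂) - KLdiv π₂ νhat := by
    have hpt : ∀ b ∈ Finset.univ, (νhat b - π₂ b) * Real.log (π₂ b / νhat b)
        = -(νhat b * Real.log (νhat b / π₂ b)) - π₂ b * Real.log (π₂ b / νhat b) := by
      intro b _
      rw [Real.log_div (hπ₂pos b).ne' (hνpos b).ne',
        Real.log_div (hνpos b).ne' (hπ₂pos b).ne']
      ring
    rw [Finset.sum_congr rfl hpt, Finset.sum_sub_distrib, Finset.sum_neg_distrib]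
    rfl
  have e1 := subsplit μhat π₁ (fun a => ∑ b : A₂, π₂ b * Q (a, b))
  have e2 := subsplit μhat π₁ (fun a => ∑ b : A₂, νhat b * Q (a, b))
  have e3 := subsplit νhat π₂ (fun b => ∑ a : A₁, π₁ a * Q (a, b))
  have e4 := subsplit νhat π₂ (fun b => ∑ a : A₁, μhat a * Q (a, b))
  rw [hS₁, hS₂, e1, e2, e3, e4, hI6, hI7, hdiff₁, hdiff₂]
  rw [swap π₁ νhat, swap π₁ π₂, swap μhat νhat, swap μhat π₂]
  have hKL1 : 0 ≤ KLdiv π₁ μhat :=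
    kl_nonneg ⟨fun a => (hπ₁pos a).le, hπ₁1⟩ hμpos hμ1
  have hKL2 : 0 ≤ KLdiv π₂ νhat :=
    kl_nonneg ⟨fun b => (hπ₂pos b).le, hπ₂1⟩ hνpos hν1
  have hinv : (0:ℝ) < η⁻¹ := inv_pos.2 hη
  nlinarith [mul_nonneg hinv.le hKL1, mul_nonneg hinv.le hKL2]

/-- numerator normalization for the SOS-MD update. -/
lemma update_numer {x r qv γ η : ℝ} (hx : 0 < x) (hr : 0 < r) :
    x ^ (1 - γ/η) * Real.exp (γ * qv) * r ^ (γ/η)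
      = x * Real.exp (γ * (qv - η⁻¹ * Real.log (x / r))) := by
  rw [Real.rpow_def_of_pos hx, Real.rpow_def_of_pos hr, ← Real.exp_add, ← Real.exp_add]
  have hxe : x * Real.exp (γ * (qv - η⁻¹ * Real.log (x / r)))
      = Real.exp (Real.log x + γ * (qv - η⁻¹ * Real.log (x / r))) := by
    rw [Real.exp_add, Real.exp_log hx]
  rw [hxe]
  congr 1
  rw [Real.log_div hx.ne' hr.ne', div_eq_mul_inv γ η]
  ring

/-- simplex-weighted averages of Q are bounded by B -/
lemma qbound {A₁ A₂ : Type*} [Fintype A₂] (Q : A₁ × A₂ → ℝ) {B : ℝ}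
    (hQ : ∀ a₁ a₂, |Q (a₁, a₂)| ≤ B) {w : A₂ → ℝ} (hw : ∀ b, 0 ≤ w b)
    (hw1 : ∑ b, w b = 1) (a : A₁) : |∑ b, w b * Q (a, b)| ≤ B := by
  calc |∑ b, w b * Q (a, b)| ≤ ∑ b, |w b * Q (a, b)| := Finset.abs_sum_le_sum_abs _ _
    _ ≤ ∑ b, w b * B := by
        apply Finset.sum_le_sum
        intro b _
        rw [abs_mul, abs_of_nonneg (hw b)]
        exact mul_le_mul_of_nonneg_left (hQ a b) (hw b)
    _ = B := by rw [← Finset.sum_mul, hw1, one_mul]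

lemma qbound_col {A₁ A₂ : Type*} [Fintype A₁] (Q : A₁ × A₂ → ℝ) {B : ℝ}
    (hQ : ∀ a₁ a₂, |Q (a₁, a₂)| ≤ B) {w : A₁ → ℝ} (hw : ∀ a, 0 ≤ w a)
    (hw1 : ∑ a, w a = 1) (b : A₂) : |∑ a, w a * Q (a, b)| ≤ B := by
  calc |∑ a, w a * Q (a, b)| ≤ ∑ a, |w a * Q (a, b)| := Finset.abs_sum_le_sum_abs _ _
    _ ≤ ∑ a, w a * B := by
        apply Finset.sum_le_sum
        intro a _
        rw [abs_mul, abs_of_nonneg (hw a)]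
        exact mul_le_mul_of_nonneg_left (hQ a b) (hw a)
    _ = B := by rw [← Finset.sum_mul, hw1, one_mul]


set_option maxHeartbeats 1600000 in
/-- last-iterate KL convergence of the SOS-MD self-play iterates with
stepsizes `γ_t = 2η/(t+2)` to the unique saddle point of the KL-regularized game:
`KL(μ̂‖π₁⁽ᵀ⁾) + KL(ν̂‖π₂⁽ᵀ⁾) ≤ 36 η² B² / (T+1)` for every `T ≥ 1`. -/
theorem stmt16 {A₁ A₂ : Type*} [Fintype A₁] [Fintype A₂] [Nonempty A₁] [Nonempty A₂]
    (Q : A₁ × A₂ → ℝ) (B : ℝ) (hQ : ∀ a₁ a₂, |Q (a₁, a₂)| ≤ B)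
    (η : ℝ) (hη : 0 < η)
    (π₁ref : A₁ → ℝ) (π₂ref : A₂ → ℝ)
    (h₁ : IsSimplex π₁ref) (h₂ : IsSimplex π₂ref)
    (h₁pos : ∀ a, 0 < π₁ref a) (h₂pos : ∀ a, 0 < π₂ref a)
    (μhat : A₁ → ℝ) (νhat : A₂ → ℝ)
    (hsaddle : IsSaddle Q η π₁ref π₂ref μhat νhat)
    (γ : ℕ → ℝ) (hγ : ∀ t : ℕ, γ t = 2 * η / ((t : ℝ) + 2))
    (π₁ : ℕ → A₁ → ℝ) (π₂ : ℕ → A₂ → ℝ)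
    (hsos : IsSOSMD Q η π₁ref π₂ref γ π₁ π₂) :
    ∀ T : ℕ, 1 ≤ T →
      KLdiv μhat (π₁ T) + KLdiv νhat (π₂ T)
        ≤ 36 * η^2 * B^2 / ((T : ℝ) + 1) := by
  obtain ⟨h10, h20, hup1, hup2⟩ := hsos
  have hBnn : 0 ≤ B :=
    le_trans (abs_nonneg _) (hQ (Classical.arbitrary A₁) (Classical.arbitrary A₂))
  have hγpos : ∀ t : ℕ, 0 < γ t := by
    intro t
    rw [hγ t]
    have : (0:ℝ) < (t:ℝ) + 2 := by positivity
    positivity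
  have hγfrac : ∀ t : ℕ, γ t * η⁻¹ = 2 / ((t:ℝ)+2) := by
    intro t
    rw [hγ t]
    field_simp
  have hγle : ∀ t : ℕ, γ t * η⁻¹ ≤ 1 := by
    intro t
    rw [hγfrac t, div_le_one (by positivity)]
    have := Nat.cast_nonneg (α := ℝ) t
    linarith
  -- saddle point characterization
  have hμeq := saddle_char₁ Q hη h₁pos hsaddle
  have hνeq := saddle_char₂ Q hη h₂pos hsaddle
  have hμpos : ∀ a, 0 < μhat a := by
    rw [hμeq]
    exact (tilt_simplex h₁pos (fun a => η * ∑ b, νhat b * Q (a, b))).1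
  have hνpos : ∀ b, 0 < νhat b := by
    rw [hνeq]
    exact (tilt_simplex h₂pos (fun b => -η * ∑ a, μhat a * Q (a, b))).1
  have hμ1 : ∑ a, μhat a = 1 := hsaddle.1.2
  have hν1 : ∑ b, νhat b = 1 := hsaddle.2.1.2
  have hZ₁pos : 0 < ∑ a', π₁ref a' * Real.exp (η * ∑ b, νhat b * Q (a', b)) :=
    Zpos h₁pos _
  have hZ₂pos : 0 < ∑ b', π₂ref b' * Real.exp (-η * ∑ a, μhat a * Q (a, b')) :=
    Zpos h₂pos _
  have hμchar : ∀ a, Real.log (μhat a / π₁ref a)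
      = η * (∑ b, νhat b * Q (a, b))
        - Real.log (∑ a', π₁ref a' * Real.exp (η * ∑ b, νhat b * Q (a', b))) := by
    intro a
    have h1 : μhat a / π₁ref a
        = Real.exp (η * ∑ b, νhat b * Q (a, b))
          / (∑ a', π₁ref a' * Real.exp (η * ∑ b, νhat b * Q (a', b))) := by
      rw [hμeq]
      calc π₁ref a * Real.exp (η * ∑ b, νhat b * Q (a, b))
            / (∑ a', π₁ref a' * Real.exp (η * ∑ b, νhat b * Q (a', b))) / π₁ref a
          = Real.exp (η * ∑ b, νhat b * Q (a, b)) * (π₁ref a / π₁ref a)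
            / (∑ a', π₁ref a' * Real.exp (η * ∑ b, νhat b * Q (a', b))) := by ring
        _ = Real.exp (η * ∑ b, νhat b * Q (a, b))
            / (∑ a', π₁ref a' * Real.exp (η * ∑ b, νhat b * Q (a', b))) := by
            rw [div_self (h₁pos a).ne', mul_one]
    rw [h1, Real.log_div (Real.exp_pos _).ne' hZ₁pos.ne', Real.log_exp]
  have hνchar : ∀ b, Real.log (νhat b / π₂ref b)
      = -η * (∑ a, μhat a * Q (a, b))
        - Real.log (∑ b', π₂ref b' * Real.exp (-η * ∑ a, μhat a * Q (a, b'))) := by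
    intro b
    have h1 : νhat b / π₂ref b
        = Real.exp (-η * ∑ a, μhat a * Q (a, b))
          / (∑ b', π₂ref b' * Real.exp (-η * ∑ a, μhat a * Q (a, b'))) := by
      rw [hνeq]
      calc π₂ref b * Real.exp (-η * ∑ a, μhat a * Q (a, b))
            / (∑ b', π₂ref b' * Real.exp (-η * ∑ a, μhat a * Q (a, b'))) / π₂ref b
          = Real.exp (-η * ∑ a, μhat a * Q (a, b)) * (π₂ref b / π₂ref b)
            / (∑ b', π₂ref b' * Real.exp (-η * ∑ a, μhat a * Q (a, b'))) := by ring
        _ = Real.exp (-η * ∑ a, μhat a * Q (a, b))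
            / (∑ b', π₂ref b' * Real.exp (-η * ∑ a, μhat a * Q (a, b'))) := by
            rw [div_self (h₂pos b).ne', mul_one]
    rw [h1, Real.log_div (Real.exp_pos _).ne' hZ₂pos.ne', Real.log_exp]
  -- update forms
  have hform1 : ∀ t : ℕ, (∀ a, 0 < π₁ t a) →
      π₁ (t + 1) = fun a => π₁ t a
          * Real.exp (γ t * ((∑ b, π₂ t b * Q (a, b))
              - η⁻¹ * Real.log (π₁ t a / π₁ref a)))
        / (∑ b', π₁ t b' * Real.exp (γ t * ((∑ b, π₂ t b * Q (b', b))
              - η⁻¹ * Real.log (π₁ t b' / π₁ref b')))) := by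
    intro t hp
    funext a
    rw [hup1 t a]
    have hnum : ∀ b', π₁ t b' ^ (1 - γ t / η)
          * Real.exp (γ t * ∑ a₂, π₂ t a₂ * Q (b', a₂)) * π₁ref b' ^ (γ t / η)
        = π₁ t b' * Real.exp (γ t * ((∑ b, π₂ t b * Q (b', b))
              - η⁻¹ * Real.log (π₁ t b' / π₁ref b'))) :=
      fun b' => update_numer (hp b') (h₁pos b')
    rw [hnum a, Finset.sum_congr rfl (fun b' _ => hnum b')]
  have hform2 : ∀ t : ℕ, (∀ b, 0 < π₂ t b) →
      π₂ (t + 1) = fun b => π₂ t b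
          * Real.exp (γ t * (-(∑ a, π₁ t a * Q (a, b))
              - η⁻¹ * Real.log (π₂ t b / π₂ref b)))
        / (∑ b', π₂ t b' * Real.exp (γ t * (-(∑ a, π₁ t a * Q (a, b'))
              - η⁻¹ * Real.log (π₂ t b' / π₂ref b')))) := by
    intro t hp
    funext b
    rw [hup2 t b]
    have hnum : ∀ b', π₂ t b' ^ (1 - γ t / η)
          * Real.exp (-(γ t) * ∑ a₁, π₁ t a₁ * Q (a₁, b')) * π₂ref b' ^ (γ t / η)
        = π₂ t b' * Real.exp (γ t * (-(∑ a, π₁ t a * Q (a, b'))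
              - η⁻¹ * Real.log (π₂ t b' / π₂ref b'))) := by
      intro b'
      rw [show -(γ t) * ∑ a₁, π₁ t a₁ * Q (a₁, b')
          = γ t * (-(∑ a, π₁ t a * Q (a, b'))) from by ring]
      exact update_numer (hp b') (h₂pos b')
    rw [hnum b, Finset.sum_congr rfl (fun b' _ => hnum b')]
  -- invariant by induction
  have hInv : ∀ t : ℕ, (∀ a, 0 < π₁ t a) ∧ (∑ a, π₁ t a = 1)
      ∧ (∀ b, 0 < π₂ t b) ∧ (∑ b, π₂ t b = 1)
      ∧ (∃ c, ∀ a, |Real.log (π₁ t a / π₁ref a) - c| ≤ η * B)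
      ∧ (∃ c, ∀ b, |Real.log (π₂ t b / π₂ref b) - c| ≤ η * B) := by
    intro t
    induction t with
    | zero =>
      refine ⟨fun a => by rw [h10]; exact h₁pos a,
        by rw [h10]; exact h₁.2,
        fun b => by rw [h20]; exact h₂pos b,
        by rw [h20]; exact h₂.2,
        ⟨0, fun a => ?_⟩, ⟨0, fun b => ?_⟩⟩
      · rw [h10, div_self (h₁pos a).ne', Real.log_one]
        simpa using mul_nonneg hη.le hBnn
      · rw [h20, div_self (h₂pos b).ne', Real.log_one]
        simpa using mul_nonneg hη.le hBnn
    | succ t ih =>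
      obtain ⟨p1, s1, p2, s2, ⟨c1, hc1⟩, ⟨c2, hc2⟩⟩ := ih
      have hf1 := hform1 t p1
      have hf2 := hform2 t p2
      obtain ⟨tp1, ts1⟩ := tilt_simplex p1
        (fun a => γ t * ((∑ b, π₂ t b * Q (a, b)) - η⁻¹ * Real.log (π₁ t a / π₁ref a)))
      obtain ⟨tp2, ts2⟩ := tilt_simplex p2
        (fun b => γ t * (-(∑ a, π₁ t a * Q (a, b)) - η⁻¹ * Real.log (π₂ t b / π₂ref b)))
      have hZ1 : (0:ℝ) < ∑ b', π₁ t b' * Real.exp (γ t * ((∑ b, π₂ t b * Q (b', b))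
          - η⁻¹ * Real.log (π₁ t b' / π₁ref b'))) := Zpos p1 _
      have hZ2 : (0:ℝ) < ∑ b', π₂ t b' * Real.exp (γ t * (-(∑ a, π₁ t a * Q (a, b'))
          - η⁻¹ * Real.log (π₂ t b' / π₂ref b'))) := Zpos p2 _
      refine ⟨fun a => by rw [hf1]; exact tp1 a,
        by rw [hf1]; exact ts1.2,
        fun b => by rw [hf2]; exact tp2 b,
        by rw [hf2]; exact ts2.2, ?_, ?_⟩
      · refine ⟨(1 - γ t * η⁻¹) * c1
          - Real.log (∑ b', π₁ t b' * Real.exp (γ t * ((∑ b, π₂ t b * Q (b', b))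
              - η⁻¹ * Real.log (π₁ t b' / π₁ref b')))), fun a => ?_⟩
        have hlr : Real.log (π₁ (t+1) a / π₁ref a)
            = Real.log (π₁ t a / π₁ref a)
              + γ t * ((∑ b, π₂ t b * Q (a, b)) - η⁻¹ * Real.log (π₁ t a / π₁ref a))
              - Real.log (∑ b', π₁ t b' * Real.exp (γ t * ((∑ b, π₂ t b * Q (b', b))
                  - η⁻¹ * Real.log (π₁ t b' / π₁ref b')))) := by
          rw [hf1]
          simp only
          rw [Real.log_div (div_pos (mul_pos (p1 a) (Real.exp_pos _)) hZ1).ne' (h₁pos a).ne',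
            Real.log_div (mul_pos (p1 a) (Real.exp_pos _)).ne' hZ1.ne',
            Real.log_mul (p1 a).ne' (Real.exp_pos _).ne', Real.log_exp,
            Real.log_div (p1 a).ne' (h₁pos a).ne']
          ring
        rw [hlr]
        have hq := qbound Q hQ (fun b => (p2 b).le) s2 a
        have hc := hc1 a
        rw [abs_le] at hq hc ⊢
        have hfr := hγle t
        have hγp := (hγpos t).le
        have hcan : γ t * η⁻¹ * η = γ t := by
          field_simp
        constructor
        · nlinarith [hq.1, hc.1, hc.2]
        · nlinarith [hq.2, hc.1, hc.2]
      · refine ⟨(1 - γ t * η⁻¹) * c2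
          - Real.log (∑ b', π₂ t b' * Real.exp (γ t * (-(∑ a, π₁ t a * Q (a, b'))
              - η⁻¹ * Real.log (π₂ t b' / π₂ref b')))), fun b => ?_⟩
        have hlr : Real.log (π₂ (t+1) b / π₂ref b)
            = Real.log (π₂ t b / π₂ref b)
              + γ t * (-(∑ a, π₁ t a * Q (a, b)) - η⁻¹ * Real.log (π₂ t b / π₂ref b))
              - Real.log (∑ b', π₂ t b' * Real.exp (γ t * (-(∑ a, π₁ t a * Q (a, b'))
                  - η⁻¹ * Real.log (π₂ t b' / π₂ref b')))) := by
          rw [hf2]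
          simp only
          rw [Real.log_div (div_pos (mul_pos (p2 b) (Real.exp_pos _)) hZ2).ne' (h₂pos b).ne',
            Real.log_div (mul_pos (p2 b) (Real.exp_pos _)).ne' hZ2.ne',
            Real.log_mul (p2 b).ne' (Real.exp_pos _).ne', Real.log_exp,
            Real.log_div (p2 b).ne' (h₂pos b).ne']
          ring
        rw [hlr]
        have hq := qbound_col Q hQ (fun a => (p1 a).le) s1 b
        have hc := hc2 b
        rw [abs_le] at hq hc ⊢
        have hfr := hγle t
        have hγp := (hγpos t).le
        have hcan : γ t * η⁻¹ * η = γ t := by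
          field_simp
        constructor
        · nlinarith [hq.1, hc.1, hc.2]
        · nlinarith [hq.2, hc.1, hc.2]
  -- one-step recursion
  have hrec : ∀ t : ℕ, KLdiv μhat (π₁ (t+1)) + KLdiv νhat (π₂ (t+1))
      ≤ (1 - γ t * η⁻¹) * (KLdiv μhat (π₁ t) + KLdiv νhat (π₂ t))
        + 9 * (γ t)^2 * B^2 := by
    intro t
    obtain ⟨p1, s1, p2, s2, ⟨c1, hc1⟩, ⟨c2, hc2⟩⟩ := hInv t
    have hf1 := hform1 t p1
    have hf2 := hform2 t p2
    have hγp := (hγpos t).le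
    have hinv : (0:ℝ) ≤ η⁻¹ := (inv_pos.2 hη).le
    have hcan : η⁻¹ * (η * B) = B := by field_simp
    -- bounds on the G functions
    have hGb1 : ∀ a, γ t * (-2*B - η⁻¹*c1)
        ≤ γ t * ((∑ b, π₂ t b * Q (a, b)) - η⁻¹ * Real.log (π₁ t a / π₁ref a))
        ∧ γ t * ((∑ b, π₂ t b * Q (a, b)) - η⁻¹ * Real.log (π₁ t a / π₁ref a))
          ≤ γ t * (2*B - η⁻¹*c1) := by
      intro a
      have hq := abs_le.1 (qbound Q hQ (fun b => (p2 b).le) s2 a)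
      have hc := abs_le.1 (hc1 a)
      have hup : η⁻¹ * Real.log (π₁ t a / π₁ref a) ≤ η⁻¹*c1 + B := by
        have := mul_le_mul_of_nonneg_left
          (show Real.log (π₁ t a / π₁ref a) ≤ c1 + η*B by linarith [hc.2]) hinv
        rw [mul_add, hcan] at this
        linarith
      have hlow : η⁻¹*c1 - B ≤ η⁻¹ * Real.log (π₁ t a / π₁ref a) := by
        have := mul_le_mul_of_nonneg_left
          (show c1 - η*B ≤ Real.log (π₁ t a / π₁ref a) by linarith [hc.1]) hinv
        rw [mul_sub, hcan] at this
        linarith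
      exact ⟨mul_le_mul_of_nonneg_left (by linarith [hq.1]) hγp,
        mul_le_mul_of_nonneg_left (by linarith [hq.2]) hγp⟩
    have hGb2 : ∀ b, γ t * (-2*B - η⁻¹*c2)
        ≤ γ t * (-(∑ a, π₁ t a * Q (a, b)) - η⁻¹ * Real.log (π₂ t b / π₂ref b))
        ∧ γ t * (-(∑ a, π₁ t a * Q (a, b)) - η⁻¹ * Real.log (π₂ t b / π₂ref b))
          ≤ γ t * (2*B - η⁻¹*c2) := by
      intro b
      have hq := abs_le.1 (qbound_col Q hQ (fun a => (p1 a).le) s1 b)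
      have hc := abs_le.1 (hc2 b)
      have hup : η⁻¹ * Real.log (π₂ t b / π₂ref b) ≤ η⁻¹*c2 + B := by
        have := mul_le_mul_of_nonneg_left
          (show Real.log (π₂ t b / π₂ref b) ≤ c2 + η*B by linarith [hc.2]) hinv
        rw [mul_add, hcan] at this
        linarith
      have hlow : η⁻¹*c2 - B ≤ η⁻¹ * Real.log (π₂ t b / π₂ref b) := by
        have := mul_le_mul_of_nonneg_left
          (show c2 - η*B ≤ Real.log (π₂ t b / π₂ref b) by linarith [hc.1]) hinv
        rw [mul_sub, hcan] at this
        linarith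
      exact ⟨mul_le_mul_of_nonneg_left (by linarith [hq.1]) hγp,
        mul_le_mul_of_nonneg_left (by linarith [hq.2]) hγp⟩
    have md1 := md_step p1 s1 hsaddle.1
      (fun a => γ t * ((∑ b, π₂ t b * Q (a, b)) - η⁻¹ * Real.log (π₁ t a / π₁ref a)))
      (γ t * (-2*B - η⁻¹*c1)) (γ t * (2*B - η⁻¹*c1)) hGb1
    have md2 := md_step p2 s2 hsaddle.2.1
      (fun b => γ t * (-(∑ a, π₁ t a * Q (a, b)) - η⁻¹ * Real.log (π₂ t b / π₂ref b)))
      (γ t * (-2*B - η⁻¹*c2)) (γ t * (2*B - η⁻¹*c2)) hGb2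
    have he1 : KLdiv μhat (π₁ (t+1))
        = KLdiv μhat (fun a => π₁ t a
            * Real.exp (γ t * ((∑ b, π₂ t b * Q (a, b))
                - η⁻¹ * Real.log (π₁ t a / π₁ref a)))
          / (∑ b', π₁ t b' * Real.exp (γ t * ((∑ b, π₂ t b * Q (b', b))
                - η⁻¹ * Real.log (π₁ t b' / π₁ref b'))))) := by rw [hf1]
    have he2 : KLdiv νhat (π₂ (t+1))
        = KLdiv νhat (fun b => π₂ t b
            * Real.exp (γ t * (-(∑ a, π₁ t a * Q (a, b))
                - η⁻¹ * Real.log (π₂ t b / π₂ref b)))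
          / (∑ b', π₂ t b' * Real.exp (γ t * (-(∑ a, π₁ t a * Q (a, b'))
                - η⁻¹ * Real.log (π₂ t b' / π₂ref b'))))) := by rw [hf2]
    rw [← he1] at md1
    rw [← he2] at md2
    have hsq1 : (9/32)*((γ t * (2*B - η⁻¹*c1)) - (γ t * (-2*B - η⁻¹*c1)))^2
        = (9/2) * (γ t)^2 * B^2 := by ring
    have hsq2 : (9/32)*((γ t * (2*B - η⁻¹*c2)) - (γ t * (-2*B - η⁻¹*c2)))^2
        = (9/2) * (γ t)^2 * B^2 := by ring
    rw [hsq1] at md1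
    rw [hsq2] at md2
    have hfac1 : ∑ a, (μhat a - π₁ t a)
          * (γ t * ((∑ b, π₂ t b * Q (a, b)) - η⁻¹ * Real.log (π₁ t a / π₁ref a)))
        = γ t * ∑ a, (μhat a - π₁ t a)
          * ((∑ b, π₂ t b * Q (a, b)) - η⁻¹ * Real.log (π₁ t a / π₁ref a)) := by
      rw [Finset.mul_sum]
      exact Finset.sum_congr rfl (fun a _ => by ring)
    have hfac2 : ∑ b, (νhat b - π₂ t b)
          * (γ t * (-(∑ a, π₁ t a * Q (a, b)) - η⁻¹ * Real.log (π₂ t b / π₂ref b)))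
        = γ t * ∑ b, (νhat b - π₂ t b)
          * (-(∑ a, π₁ t a * Q (a, b)) - η⁻¹ * Real.log (π₂ t b / π₂ref b)) := by
      rw [Finset.mul_sum]
      exact Finset.sum_congr rfl (fun b _ => by ring)
    rw [hfac1] at md1
    rw [hfac2] at md2
    have hmono := mono_ineq Q hη hμpos hμ1 hνpos hν1 p1 s1 p2 s2
      (Real.log (∑ a', π₁ref a' * Real.exp (η * ∑ b, νhat b * Q (a', b))))
      (Real.log (∑ b', π₂ref b' * Real.exp (-η * ∑ a, μhat a * Q (a, b'))))
      hμchar hνchar h₁pos h₂pos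
    have hmul := mul_le_mul_of_nonneg_left hmono hγp
    have hexp1 : γ t * (η⁻¹ * (KLdiv μhat (π₁ t) + KLdiv νhat (π₂ t)))
        = (γ t * η⁻¹) * (KLdiv μhat (π₁ t) + KLdiv νhat (π₂ t)) := by ring
    have hexp2 : (1 - γ t * η⁻¹) * (KLdiv μhat (π₁ t) + KLdiv νhat (π₂ t))
        = (KLdiv μhat (π₁ t) + KLdiv νhat (π₂ t))
          - (γ t * η⁻¹) * (KLdiv μhat (π₁ t) + KLdiv νhat (π₂ t)) := by ring
    rw [hexp1] at hmul
    rw [hexp2]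
    have hdistr : γ t * ((∑ a, (μhat a - π₁ t a)
          * ((∑ b, π₂ t b * Q (a, b)) - η⁻¹ * Real.log (π₁ t a / π₁ref a)))
        + (∑ b, (νhat b - π₂ t b)
          * (-(∑ a, π₁ t a * Q (a, b)) - η⁻¹ * Real.log (π₂ t b / π₂ref b))))
        = γ t * (∑ a, (μhat a - π₁ t a)
          * ((∑ b, π₂ t b * Q (a, b)) - η⁻¹ * Real.log (π₁ t a / π₁ref a)))
        + γ t * (∑ b, (νhat b - π₂ t b)
          * (-(∑ a, π₁ t a * Q (a, b)) - η⁻¹ * Real.log (π₂ t b / π₂ref b))) := by ring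
    rw [hdistr] at hmul
    linarith [md1, md2, hmul]
  -- final induction
  intro T hT
  induction T, hT using Nat.le_induction with
  | base =>
    have h0 := hrec 0
    have hγ0 : γ 0 = η := by
      rw [hγ 0]
      norm_num
    rw [hγ0, mul_inv_cancel₀ hη.ne'] at h0
    norm_num at h0 ⊢
    nlinarith [h0, mul_nonneg (mul_nonneg (by norm_num : (0:ℝ) ≤ 9) (sq_nonneg η)) (sq_nonneg B)]
  | succ T hT ih =>
    have hr := hrec T
    set x : ℝ := (T:ℝ) with hxdef
    have hx1 : (1:ℝ) ≤ x := by rw [hxdef]; exact_mod_cast hT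
    have hco : 1 - γ T * η⁻¹ = x/(x+2) := by
      rw [hγfrac T]
      field_simp
      rw [hxdef]; ring
    have hconn : (0:ℝ) ≤ x/(x+2) := by positivity
    have hKnn : (0:ℝ) ≤ 36 * η^2 * B^2 := by positivity
    have h1 : (1 - γ T * η⁻¹) * (KLdiv μhat (π₁ T) + KLdiv νhat (π₂ T))
        ≤ (x/(x+2)) * (36 * η^2 * B^2 / (x+1)) := by
      rw [hco]
      exact mul_le_mul_of_nonneg_left ih hconn
    have hγsq : 9 * (γ T)^2 * B^2 = 36 * η^2 * B^2 / ((x+2)^2) := by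
      rw [hγ T, ← hxdef]
      field_simp
      ring
    have hkey : x/((x+2)*(x+1)) + 1/((x+2)^2) ≤ 1/(x+2) := by
      rw [div_add_div _ _ (by positivity) (by positivity),
        div_le_div_iff₀ (by positivity) (by positivity)]
      nlinarith
    have hcomb : (x/(x+2)) * (36 * η^2 * B^2 / (x+1)) + 36 * η^2 * B^2 / ((x+2)^2)
        = 36 * η^2 * B^2 * (x/((x+2)*(x+1)) + 1/((x+2)^2)) := by
      field_simp
    have hfin : (x/(x+2)) * (36 * η^2 * B^2 / (x+1)) + 36 * η^2 * B^2 / ((x+2)^2)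
        ≤ 36 * η^2 * B^2 / (x+2) := by
      rw [hcomb]
      calc 36 * η^2 * B^2 * (x/((x+2)*(x+1)) + 1/((x+2)^2))
          ≤ 36 * η^2 * B^2 * (1/(x+2)) := mul_le_mul_of_nonneg_left hkey hKnn
        _ = 36 * η^2 * B^2 / (x+2) := by ring
    have hcast : ((T+1:ℕ):ℝ) + 1 = x + 2 := by
      push_cast
      ring
    rw [hcast]
    calc KLdiv μhat (π₁ (T+1)) + KLdiv νhat (π₂ (T+1))
        ≤ (1 - γ T * η⁻¹) * (KLdiv μhat (π₁ T) + KLdiv νhat (π₂ T))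
          + 9 * (γ T)^2 * B^2 := hr
      _ ≤ (x/(x+2)) * (36 * η^2 * B^2 / (x+1)) + 36 * η^2 * B^2 / ((x+2)^2) := by
          rw [← hγsq]
          linarith [h1]
      _ ≤ 36 * η^2 * B^2 / (x+2) := hfin
end

section
/- Let A₁, A₂ be finite nonempty sets, Q : A₁ × A₂ → ℝ with max_{a₁,a₂} |Q(a₁,a₂)| ≤ B, η > 0, and π₁ʳᵉᶠ ∈ Δ(A₁), π₂ʳᵉᶠ ∈ Δ(A₂) strictly positive. Let (μ̂, ν̂) be the unique saddle point of the KL-regularized objective J_Q, and let (π₁⁽ᵗ⁾, π₂⁽ᵗ⁾) be the SOS-MD iterates with stepsizes γ_t = 2η/(t+2). Then for every T ≥ 1: ‖μ̂ − π₁⁽ᵀ⁾‖₁ + ‖ν̂ − π₂⁽ᵀ⁾‖₁ ≤ 12·η·B / √(T+1). -/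
open Finset

set_option maxHeartbeats 4000000

section AuxLemmas

private lemma sos_aux_deriv1 {t : ℝ} (ht : 0 < t) :
    HasDerivAt (fun t : ℝ => t * Real.log t - t + 1 - 3*(t-1)^2/(2*(t+2)))
      (Real.log t - 3*(t-1)*(t+5)/(2*(t+2)^2)) t := by
  have h2 : (2*(t+2)) ≠ 0 := by nlinarith
  have hnum : HasDerivAt (fun t : ℝ => 3*(t-1)^2) (3*(2*(t-1))) t := by
    simpa using (((hasDerivAt_id t).sub_const 1).pow 2).const_mul 3
  have hden : HasDerivAt (fun t : ℝ => 2*(t+2)) 2 t := by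
    simpa using ((hasDerivAt_id t).add_const 2).const_mul 2
  have hr : HasDerivAt (fun t : ℝ => 3*(t-1)^2/(2*(t+2)))
      (3*(t-1)*(t+5)/(2*(t+2)^2)) t := by
    have := hnum.div hden h2
    refine HasDerivAt.congr_deriv this ?_
    field_simp
    ring
  have hml : HasDerivAt (fun t : ℝ => t * Real.log t) (Real.log t + 1) t :=
    Real.hasDerivAt_mul_log (ne_of_gt ht)
  have := ((hml.sub (hasDerivAt_id t)).add_const 1).sub hr
  refine HasDerivAt.congr_deriv this ?_
  ring

private lemma sos_aux_deriv2 {t : ℝ} (ht : 0 < t) :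
    HasDerivAt (fun t : ℝ => Real.log t - 3*(t-1)*(t+5)/(2*(t+2)^2))
      (1/t - 27/(t+2)^3) t := by
  have h2 : (2*(t+2)^2) ≠ 0 := by nlinarith
  have hnum : HasDerivAt (fun t : ℝ => 3*(t-1)*(t+5)) (3*((t-1)+(t+5))) t := by
    have h := (((hasDerivAt_id t).sub_const 1).mul ((hasDerivAt_id t).add_const 5)).const_mul 3
    have h2' : (fun y : ℝ => 3*(y-1)*(y+5)) = fun y : ℝ => 3*((id y - 1)*(id y + 5)) := by
      funext y; simp [mul_assoc]
    rw [h2']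
    refine HasDerivAt.congr_deriv h ?_
    simp; ring
  have hden : HasDerivAt (fun t : ℝ => 2*(t+2)^2) (2*(2*(t+2))) t := by
    simpa using (((hasDerivAt_id t).add_const 2).pow 2).const_mul 2
  have hr : HasDerivAt (fun t : ℝ => 3*(t-1)*(t+5)/(2*(t+2)^2)) (27/(t+2)^3) t := by
    have := hnum.div hden h2
    refine HasDerivAt.congr_deriv this ?_
    have h3 : (t+2) ≠ 0 := by nlinarith
    field_simp
    ring
  have := (Real.hasDerivAt_log (ne_of_gt ht)).sub hr
  refine HasDerivAt.congr_deriv this ?_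
  rw [one_div]

private lemma sos_pointwise_pinsker_t {t : ℝ} (ht : 0 ≤ t) :
    3*(t-1)^2/(2*(t+2)) ≤ t * Real.log t - t + 1 := by
  set φ : ℝ → ℝ := fun t : ℝ => t * Real.log t - t + 1 - 3*(t-1)^2/(2*(t+2)) with hφ
  set ψ : ℝ → ℝ := fun t : ℝ => Real.log t - 3*(t-1)*(t+5)/(2*(t+2)^2) with hψ
  have hψ1 : ψ 1 = 0 := by simp [hψ]
  have hψmono : MonotoneOn ψ (Set.Ioi (0:ℝ)) := by
    apply monotoneOn_of_deriv_nonneg (convex_Ioi 0)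
    · intro x hx
      exact (sos_aux_deriv2 hx).continuousAt.continuousWithinAt
    · intro x hx
      rw [interior_Ioi] at hx
      exact (sos_aux_deriv2 hx).differentiableAt.differentiableWithinAt
    · intro x hx
      rw [interior_Ioi] at hx
      rw [(sos_aux_deriv2 hx).deriv]
      have hx' : (0:ℝ) < x := hx
      have key : 27 * x ≤ (x+2)^3 := by nlinarith [sq_nonneg (x-1), hx'.le]
      have h1 : 27/(x+2)^3 ≤ 1/x := by
        rw [div_le_div_iff₀ (by positivity) hx']
        nlinarith
      linarith
  have hφd : ∀ x ∈ Set.Ioi (0:ℝ), HasDerivAt φ (ψ x) x := fun x hx => sos_aux_deriv1 hx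
  have hφmono : MonotoneOn φ (Set.Ici (1:ℝ)) := by
    apply monotoneOn_of_deriv_nonneg (convex_Ici 1)
    · intro x hx
      exact (hφd x (Set.mem_Ioi.2 (lt_of_lt_of_le one_pos hx))).continuousAt.continuousWithinAt
    · intro x hx
      rw [interior_Ici] at hx
      exact (hφd x (Set.mem_Ioi.2 (lt_trans one_pos hx))).differentiableAt.differentiableWithinAt
    · intro x hx
      rw [interior_Ici] at hx
      rw [(hφd x (Set.mem_Ioi.2 (lt_trans one_pos hx))).deriv]
      rw [← hψ1]
      exact hψmono (Set.mem_Ioi.2 one_pos) (Set.mem_Ioi.2 (lt_trans one_pos hx)) hx.le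
  have hφanti : AntitoneOn φ (Set.Icc (0:ℝ) 1) := by
    apply antitoneOn_of_deriv_nonpos (convex_Icc 0 1)
    · apply ContinuousOn.sub
      · apply ContinuousOn.add
        · exact (Real.continuous_mul_log.sub continuous_id).continuousOn
        · exact continuousOn_const
      · apply ContinuousOn.div (by fun_prop) (by fun_prop)
        intro x hx
        have := hx.1
        nlinarith
    · intro x hx
      rw [interior_Icc] at hx
      exact (hφd x hx.1).differentiableAt.differentiableWithinAt
    · intro x hx
      rw [interior_Icc] at hx
      rw [(hφd x hx.1).deriv, ← hψ1]
      exact hψmono (Set.mem_Ioi.2 hx.1) (Set.mem_Ioi.2 one_pos) hx.2.le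
  have hφ1 : φ 1 = 0 := by simp [hφ]
  have hpos : 0 ≤ φ t := by
    rcases le_total t 1 with h | h
    · have := hφanti (Set.mem_Icc.2 ⟨ht, h⟩) (Set.mem_Icc.2 ⟨zero_le_one, le_refl 1⟩) h
      rw [hφ1] at this; exact this
    · have := hφmono (Set.mem_Ici.2 (le_refl 1)) (Set.mem_Ici.2 h) h
      rw [hφ1] at this; exact this
  simp only [hφ] at hpos
  linarith

private lemma sos_pointwise_pinsker {x y : ℝ} (hx : 0 ≤ x) (hy : 0 < y) :
    3*(x-y)^2/(2*(x+2*y)) ≤ x * Real.log (x/y) - x + y := by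
  have h := sos_pointwise_pinsker_t (div_nonneg hx hy.le)
  have h2 := mul_le_mul_of_nonneg_left h hy.le
  have hxy : 0 < x + 2*y := by linarith
  calc 3*(x-y)^2/(2*(x+2*y)) = y * (3*(x/y-1)^2/(2*(x/y+2))) := by
        rw [eq_comm]
        field_simp
    _ ≤ y * (x/y*Real.log (x/y) - x/y + 1) := h2
    _ = x * Real.log (x/y) - x + y := by field_simp

private lemma sos_kl_self {A : Type*} [Fintype A] (p : A → ℝ) : KLdiv p p = 0 := by
  unfold KLdiv
  apply Finset.sum_eq_zero
  intro a _
  by_cases h : p a = 0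
  · simp [h]
  · rw [div_self h, Real.log_one, mul_zero]

private lemma sos_pinsker {A : Type*} [Fintype A] (p q : A → ℝ)
    (hp : IsSimplex p) (hq1 : ∑ a, q a = 1) (hq0 : ∀ a, 0 < q a) :
    (∑ a, |p a - q a|)^2 ≤ 2 * KLdiv p q := by
  obtain ⟨hp0, hp1⟩ := hp
  set w : A → ℝ := fun a => 2/3 * p a + 4/3 * q a with hw
  have hwpos : ∀ a, 0 < w a := fun a => by
    have := hp0 a; have := hq0 a; simp only [hw]; nlinarith
  have hwsum : ∑ a, w a = 2 := by
    simp only [hw]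
    rw [Finset.sum_add_distrib, ← Finset.mul_sum, ← Finset.mul_sum, hp1, hq1]
    norm_num
  have hcs := Finset.sum_mul_sq_le_sq_mul_sq Finset.univ
    (fun a => |p a - q a| / Real.sqrt (w a)) (fun a => Real.sqrt (w a))
  have e1 : ∀ a : A, |p a - q a| / Real.sqrt (w a) * Real.sqrt (w a) = |p a - q a| := by
    intro a
    rw [div_mul_cancel₀]
    exact Real.sqrt_ne_zero'.2 (hwpos a)
  have e2 : ∀ a : A, (|p a - q a| / Real.sqrt (w a))^2 = (p a - q a)^2 / w a := by
    intro a
    rw [div_pow, sq_abs, Real.sq_sqrt (hwpos a).le]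
  have e3 : ∀ a : A, (Real.sqrt (w a))^2 = w a := fun a => Real.sq_sqrt (hwpos a).le
  simp only [e1, e2, e3] at hcs
  rw [hwsum] at hcs
  have key : ∑ a, (p a - q a)^2 / w a ≤ KLdiv p q := by
    have hterm : ∀ a : A, (p a - q a)^2 / w a
        ≤ p a * Real.log (p a / q a) - p a + q a := by
      intro a
      have h := sos_pointwise_pinsker (hp0 a) (hq0 a)
      have heq : (p a - q a)^2 / w a = 3*(p a - q a)^2/(2*(p a + 2 * q a)) := by
        have h1 : 0 < p a + 2 * q a := by have := hp0 a; have := hq0 a; linarith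
        rw [hw, div_eq_div_iff (by have := hp0 a; have := hq0 a; nlinarith) (by linarith)]
        ring
      rw [heq]
      exact h
    calc ∑ a, (p a - q a)^2 / w a
        ≤ ∑ a, (p a * Real.log (p a / q a) - p a + q a) :=
          Finset.sum_le_sum (fun a _ => hterm a)
      _ = KLdiv p q := by
          rw [Finset.sum_add_distrib, Finset.sum_sub_distrib, hp1, hq1]
          simp [KLdiv]
  calc (∑ a, |p a - q a|)^2 ≤ (∑ a, (p a - q a)^2 / w a) * 2 := hcs
    _ ≤ KLdiv p q * 2 := by
        apply mul_le_mul_of_nonneg_right key; norm_num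
    _ = 2 * KLdiv p q := mul_comm _ _

private lemma sos_kl_nonneg {A : Type*} [Fintype A] (p q : A → ℝ)
    (hp : IsSimplex p) (hq1 : ∑ a, q a = 1) (hq0 : ∀ a, 0 < q a) :
    0 ≤ KLdiv p q := by
  have h := sos_pinsker p q hp hq1 hq0
  nlinarith [sq_nonneg (∑ a, |p a - q a|)]

private lemma sos_l1_le_two {A : Type*} [Fintype A] (p q : A → ℝ)
    (hp0 : ∀ a, 0 ≤ p a) (hp1 : ∑ a, p a = 1)
    (hq0 : ∀ a, 0 ≤ q a) (hq1 : ∑ a, q a = 1) :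
    ∑ a, |p a - q a| ≤ 2 := by
  calc ∑ a, |p a - q a| ≤ ∑ a, (p a + q a) := by
        apply Finset.sum_le_sum
        intro a _
        have h := abs_sub (p a) (q a)
        rw [abs_of_nonneg (hp0 a), abs_of_nonneg (hq0 a)] at h
        exact h
    _ = 2 := by rw [Finset.sum_add_distrib, hp1, hq1]; norm_num

private lemma sos_kl_update {A : Type*} [Fintype A] [Nonempty A] (πt ref : A → ℝ)
    (hπt0 : ∀ a, 0 < πt a) (href0 : ∀ a, 0 < ref a)
    (c : ℝ) (f : A → ℝ) (πp : A → ℝ)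
    (hπp : ∀ a, πp a = πt a ^ (1 - c) * Real.exp (f a) * ref a ^ c
        / ∑ b, πt b ^ (1 - c) * Real.exp (f b) * ref b ^ c) :
    (∀ a, 0 < πp a) ∧ (∑ a, πp a = 1) ∧
    ∀ p : A → ℝ, (∀ a, 0 ≤ p a) → (∑ a, p a = 1) →
      KLdiv p πp = (1 - c) * (KLdiv p πt - KLdiv πp πt)
        + c * (KLdiv p ref - KLdiv πp ref) - ∑ a, (p a - πp a) * f a := by
  set Z : ℝ := ∑ b, πt b ^ (1 - c) * Real.exp (f b) * ref b ^ c with hZ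
  have hterm : ∀ a, 0 < πt a ^ (1 - c) * Real.exp (f a) * ref a ^ c := by
    intro a
    have h1 := Real.rpow_pos_of_pos (hπt0 a) (1 - c)
    have h2 := Real.rpow_pos_of_pos (href0 a) c
    positivity
  have hZpos : 0 < Z := Finset.sum_pos (fun a _ => hterm a) Finset.univ_nonempty
  have hpos : ∀ a, 0 < πp a := by
    intro a
    rw [hπp a]
    exact div_pos (hterm a) hZpos
  have hsum : ∑ a, πp a = 1 := by
    rw [Finset.sum_congr rfl (fun a _ => hπp a), ← Finset.sum_div, ← hZ,
      div_self (ne_of_gt hZpos)]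
  refine ⟨hpos, hsum, ?_⟩
  have aux : ∀ p : A → ℝ, (∀ a, 0 ≤ p a) → (∑ a, p a = 1) →
      KLdiv p πp = (1 - c) * KLdiv p πt + c * KLdiv p ref
        - (∑ a, p a * f a) + Real.log Z := by
    intro p hp0 hp1
    have hterm_eq : ∀ a : A, p a * Real.log (p a / πp a)
        = (1 - c) * (p a * Real.log (p a / πt a)) + c * (p a * Real.log (p a / ref a))
          - p a * f a + p a * Real.log Z := by
      intro a
      rcases eq_or_lt_of_le (hp0 a) with h | h
      · simp [← h]
      · have hpne : p a ≠ 0 := ne_of_gt h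
        have hlogπp : Real.log (πp a)
            = (1 - c) * Real.log (πt a) + f a + c * Real.log (ref a) - Real.log Z := by
          rw [hπp a, Real.log_div (ne_of_gt (hterm a)) (ne_of_gt hZpos),
            Real.log_mul (ne_of_gt (mul_pos (Real.rpow_pos_of_pos (hπt0 a) (1-c))
              (Real.exp_pos _))) (ne_of_gt (Real.rpow_pos_of_pos (href0 a) c)),
            Real.log_mul (ne_of_gt (Real.rpow_pos_of_pos (hπt0 a) (1-c))) (Real.exp_ne_zero _),
            Real.log_rpow (hπt0 a), Real.log_rpow (href0 a), Real.log_exp]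
        rw [Real.log_div hpne (ne_of_gt (hpos a)),
          Real.log_div hpne (ne_of_gt (hπt0 a)),
          Real.log_div hpne (ne_of_gt (href0 a)), hlogπp]
        ring
    unfold KLdiv
    rw [Finset.sum_congr rfl (fun a _ => hterm_eq a)]
    rw [Finset.sum_add_distrib, Finset.sum_sub_distrib, Finset.sum_add_distrib,
      ← Finset.mul_sum, ← Finset.mul_sum, ← Finset.sum_mul, hp1, one_mul]
  intro p hp0 hp1
  have h1 := aux p hp0 hp1
  have h2 := aux πp (fun a => (hpos a).le) hsum
  rw [sos_kl_self] at h2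
  have h3 : ∑ a, (p a - πp a) * f a = (∑ a, p a * f a) - ∑ a, πp a * f a := by
    rw [← Finset.sum_sub_distrib]
    congr 1
    funext a
    ring
  rw [h3]
  linarith

end AuxLemmas

/-- last-iterate ℓ1 convergence of the SOS-MD self-play iterates with
stepsizes `γ_t = 2η/(t+2)` to the unique saddle point of the KL-regularized game:
`‖μ̂ − π₁⁽ᵀ⁾‖₁ + ‖ν̂ − π₂⁽ᵀ⁾‖₁ ≤ 12 η B / √(T+1)` for every `T ≥ 1`. -/
theorem stmt17 {A₁ A₂ : Type*} [Fintype A₁] [Fintype A₂] [Nonempty A₁] [Nonempty A₂]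
    (Q : A₁ × A₂ → ℝ) (B : ℝ) (hQ : ∀ a₁ a₂, |Q (a₁, a₂)| ≤ B)
    (η : ℝ) (hη : 0 < η)
    (π₁ref : A₁ → ℝ) (π₂ref : A₂ → ℝ)
    (h₁ : IsSimplex π₁ref) (h₂ : IsSimplex π₂ref)
    (h₁pos : ∀ a, 0 < π₁ref a) (h₂pos : ∀ a, 0 < π₂ref a)
    (μhat : A₁ → ℝ) (νhat : A₂ → ℝ)
    (hsaddle : IsSaddle Q η π₁ref π₂ref μhat νhat)
    (γ : ℕ → ℝ) (hγ : ∀ t : ℕ, γ t = 2 * η / ((t : ℝ) + 2))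
    (π₁ : ℕ → A₁ → ℝ) (π₂ : ℕ → A₂ → ℝ)
    (hsos : IsSOSMD Q η π₁ref π₂ref γ π₁ π₂) :
    ∀ T : ℕ, 1 ≤ T →
      (∑ a₁, |μhat a₁ - π₁ T a₁|) + (∑ a₂, |νhat a₂ - π₂ T a₂|)
        ≤ 12 * η * B / Real.sqrt ((T : ℝ) + 1) := by
  obtain ⟨hμs, hνs, hsad1, hsad2⟩ := hsaddle
  obtain ⟨h10, h20, h1step, h2step⟩ := hsos
  have hηne : η ≠ 0 := ne_of_gt hη
  have hB : 0 ≤ B :=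
    le_trans (abs_nonneg _) (hQ (Classical.arbitrary A₁) (Classical.arbitrary A₂))
  set q1hat : A₁ → ℝ := fun a₁ => ∑ a₂, νhat a₂ * Q (a₁, a₂) with hq1hat
  set q2hat : A₂ → ℝ := fun a₂ => ∑ a₁, μhat a₁ * Q (a₁, a₂) with hq2hat
  -- expansion helpers
  have hexp1 : ∀ (x : A₁ → ℝ) (v : A₂ → ℝ),
      ∑ a₁, x a₁ * (∑ a₂, v a₂ * Q (a₁, a₂)) = ∑ a₁, ∑ a₂, x a₁ * v a₂ * Q (a₁, a₂) := by
    intro x v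
    apply Finset.sum_congr rfl
    intro a₁ _
    rw [Finset.mul_sum]
    apply Finset.sum_congr rfl
    intro a₂ _
    ring
  have hexp2 : ∀ (u : A₁ → ℝ) (y : A₂ → ℝ),
      ∑ a₂, y a₂ * (∑ a₁, u a₁ * Q (a₁, a₂)) = ∑ a₁, ∑ a₂, u a₁ * y a₂ * Q (a₁, a₂) := by
    intro u y
    rw [Finset.sum_comm]
    apply Finset.sum_congr rfl
    intro a₂ _
    rw [Finset.mul_sum]
    apply Finset.sum_congr rfl
    intro a₁ _
    ring
  have hDSle : ∀ (x : A₁ → ℝ) (y : A₂ → ℝ),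
      |∑ a₁, ∑ a₂, x a₁ * y a₂ * Q (a₁, a₂)| ≤ B * (∑ a₁, |x a₁|) * (∑ a₂, |y a₂|) := by
    intro x y
    calc |∑ a₁, ∑ a₂, x a₁ * y a₂ * Q (a₁, a₂)|
        ≤ ∑ a₁, |∑ a₂, x a₁ * y a₂ * Q (a₁, a₂)| := Finset.abs_sum_le_sum_abs _ _
      _ ≤ ∑ a₁, ∑ a₂, |x a₁ * y a₂ * Q (a₁, a₂)| :=
          Finset.sum_le_sum (fun a₁ _ => Finset.abs_sum_le_sum_abs _ _)
      _ ≤ ∑ a₁, ∑ a₂, |x a₁| * |y a₂| * B := by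
          apply Finset.sum_le_sum
          intro a₁ _
          apply Finset.sum_le_sum
          intro a₂ _
          rw [abs_mul, abs_mul]
          exact mul_le_mul_of_nonneg_left (hQ a₁ a₂) (by positivity)
      _ = B * (∑ a₁, |x a₁|) * (∑ a₂, |y a₂|) := by
          rw [mul_assoc, Finset.sum_mul_sum, Finset.mul_sum]
          apply Finset.sum_congr rfl
          intro a₁ _
          rw [Finset.mul_sum]
          apply Finset.sum_congr rfl
          intro a₂ _
          ring
  -- The saddle point policies are Gibbs policies
  set g1 : A₁ → ℝ := fun a => π₁ref a ^ (1-(1:ℝ)) * Real.exp (η * q1hat a) * π₁ref a ^ (1:ℝ)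
      / ∑ b, π₁ref b ^ (1-(1:ℝ)) * Real.exp (η * q1hat b) * π₁ref b ^ (1:ℝ) with hg1def
  obtain ⟨hg1pos, hg1sum, hg1id⟩ := sos_kl_update π₁ref π₁ref h₁pos h₁pos 1
    (fun a => η * q1hat a) g1 (fun a => rfl)
  set g2 : A₂ → ℝ := fun a => π₂ref a ^ (1-(1:ℝ)) * Real.exp (-(η * q2hat a)) * π₂ref a ^ (1:ℝ)
      / ∑ b, π₂ref b ^ (1-(1:ℝ)) * Real.exp (-(η * q2hat b)) * π₂ref b ^ (1:ℝ) with hg2def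
  obtain ⟨hg2pos, hg2sum, hg2id⟩ := sos_kl_update π₂ref π₂ref h₂pos h₂pos 1
    (fun a => -(η * q2hat a)) g2 (fun a => rfl)
  have hJ1 : ∀ μ : A₁ → ℝ, J Q η π₁ref π₂ref μ νhat
      = (∑ a₁, μ a₁ * q1hat a₁) - η⁻¹ * KLdiv μ π₁ref + η⁻¹ * KLdiv νhat π₂ref := by
    intro μ
    unfold J
    simp only [hq1hat]
    rw [← hexp1 μ νhat]
  have hJ2 : ∀ ν : A₂ → ℝ, J Q η π₁ref π₂ref μhat ν
      = (∑ a₂, ν a₂ * q2hat a₂) - η⁻¹ * KLdiv μhat π₁ref + η⁻¹ * KLdiv ν π₂ref := by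
    intro ν
    unfold J
    simp only [hq2hat]
    rw [← hexp2 μhat ν]
  -- μhat = g1
  have hsub1 : ∀ p : A₁ → ℝ, ∑ a, (p a - g1 a) * (η * q1hat a)
      = η * ((∑ a, p a * q1hat a) - ∑ a, g1 a * q1hat a) := by
    intro p
    rw [mul_sub, Finset.mul_sum, Finset.mul_sum, ← Finset.sum_sub_distrib]
    apply Finset.sum_congr rfl
    intro a _
    ring
  have hμeq : μhat = g1 := by
    have hJd := hsad1 g1 ⟨fun a => (hg1pos a).le, hg1sum⟩
    rw [hJ1 g1, hJ1 μhat] at hJd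
    have hid := hg1id μhat hμs.1 hμs.2
    rw [hsub1 μhat] at hid
    have hKL : KLdiv μhat g1 ≤ 0 := by
      rw [hid]
      have h3 : η⁻¹ * (KLdiv μhat π₁ref - KLdiv g1 π₁ref)
          ≤ (∑ a, μhat a * q1hat a) - ∑ a, g1 a * q1hat a := by linarith
      have h4 := mul_le_mul_of_nonneg_left h3 hη.le
      rw [← mul_assoc, mul_inv_cancel₀ hηne, one_mul] at h4
      linarith
    have hp := sos_pinsker μhat g1 hμs hg1sum hg1pos
    have hs0 : ∑ a, |μhat a - g1 a| = 0 := by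
      have h1 : 0 ≤ ∑ a, |μhat a - g1 a| :=
        Finset.sum_nonneg (fun a _ => abs_nonneg _)
      nlinarith
    funext a
    have := (Finset.sum_eq_zero_iff_of_nonneg (fun a _ => abs_nonneg _)).1 hs0 a (Finset.mem_univ a)
    exact sub_eq_zero.1 (abs_eq_zero.1 this)
  have hsub2 : ∀ p : A₂ → ℝ, ∑ a, (p a - g2 a) * (-(η * q2hat a))
      = -(η * ((∑ a, p a * q2hat a) - ∑ a, g2 a * q2hat a)) := by
    intro p
    rw [mul_sub, Finset.mul_sum, Finset.mul_sum, neg_sub, ← Finset.sum_sub_distrib]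
    apply Finset.sum_congr rfl
    intro a _
    ring
  have hνeq : νhat = g2 := by
    have hJd := hsad2 g2 ⟨fun a => (hg2pos a).le, hg2sum⟩
    rw [hJ2 g2, hJ2 νhat] at hJd
    have hid := hg2id νhat hνs.1 hνs.2
    rw [hsub2 νhat] at hid
    have hKL : KLdiv νhat g2 ≤ 0 := by
      rw [hid]
      have h3 : η⁻¹ * (KLdiv νhat π₂ref - KLdiv g2 π₂ref)
          ≤ (∑ a, g2 a * q2hat a) - ∑ a, νhat a * q2hat a := by linarith
      have h4 := mul_le_mul_of_nonneg_left h3 hη.le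
      rw [← mul_assoc, mul_inv_cancel₀ hηne, one_mul] at h4
      linarith
    have hp := sos_pinsker νhat g2 hνs hg2sum hg2pos
    have hs0 : ∑ a, |νhat a - g2 a| = 0 := by
      have h1 : 0 ≤ ∑ a, |νhat a - g2 a| :=
        Finset.sum_nonneg (fun a _ => abs_nonneg _)
      nlinarith
    funext a
    have := (Finset.sum_eq_zero_iff_of_nonneg (fun a _ => abs_nonneg _)).1 hs0 a (Finset.mem_univ a)
    exact sub_eq_zero.1 (abs_eq_zero.1 this)
  have hμpos : ∀ a, 0 < μhat a := fun a => hμeq ▸ hg1pos a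
  have hνpos : ∀ a, 0 < νhat a := fun a => hνeq ▸ hg2pos a
  -- Gibbs identities for the saddle point
  have hgibbs1 : ∀ p : A₁ → ℝ, (∀ a, 0 ≤ p a) → (∑ a, p a = 1) →
      KLdiv p μhat = KLdiv p π₁ref - KLdiv μhat π₁ref
        - η * ((∑ a, p a * q1hat a) - ∑ a, μhat a * q1hat a) := by
    intro p hp0 hp1
    have hid := hg1id p hp0 hp1
    rw [hsub1 p] at hid
    rw [← hμeq] at hid
    rw [hid]
    ring
  have hgibbs2 : ∀ p : A₂ → ℝ, (∀ a, 0 ≤ p a) → (∑ a, p a = 1) →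
      KLdiv p νhat = KLdiv p π₂ref - KLdiv νhat π₂ref
        + η * ((∑ a, p a * q2hat a) - ∑ a, νhat a * q2hat a) := by
    intro p hp0 hp1
    have hid := hg2id p hp0 hp1
    rw [hsub2 p] at hid
    rw [← hνeq] at hid
    rw [hid]
    ring
  -- iterates are positive simplexes
  have hiter : ∀ t : ℕ, (∀ a, 0 < π₁ t a) ∧ (∑ a, π₁ t a = 1)
      ∧ (∀ a, 0 < π₂ t a) ∧ (∑ a, π₂ t a = 1) := by
    intro t
    induction t with
    | zero => rw [h10, h20]; exact ⟨h₁pos, h₁.2, h₂pos, h₂.2⟩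
    | succ t ih =>
      obtain ⟨p1, s1, p2, s2⟩ := ih
      obtain ⟨P1, S1, _⟩ := sos_kl_update (π₁ t) π₁ref p1 h₁pos (γ t / η)
        (fun a₁ => γ t * ∑ a₂, π₂ t a₂ * Q (a₁, a₂)) (π₁ (t+1)) (h1step t)
      obtain ⟨P2, S2, _⟩ := sos_kl_update (π₂ t) π₂ref p2 h₂pos (γ t / η)
        (fun a₂ => -(γ t) * ∑ a₁, π₁ t a₁ * Q (a₁, a₂)) (π₂ (t+1)) (h2step t)
      exact ⟨P1, S1, P2, S2⟩
  -- the master one-step inequality (multiplied through by η)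
  have master : ∀ t : ℕ,
      η * (KLdiv μhat (π₁ (t+1)) + KLdiv νhat (π₂ (t+1)))
      ≤ (η - γ t) * (KLdiv μhat (π₁ t) + KLdiv νhat (π₂ t))
        - (η - γ t) * (KLdiv (π₁ (t+1)) (π₁ t) + KLdiv (π₂ (t+1)) (π₂ t))
        + η * γ t *
          ((∑ a₁, ∑ a₂, (π₁ (t+1) a₁ - μhat a₁) * (π₂ t a₂ - νhat a₂) * Q (a₁, a₂))
           - ∑ a₁, ∑ a₂, (π₁ t a₁ - μhat a₁) * (π₂ (t+1) a₂ - νhat a₂) * Q (a₁, a₂)) := by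
    intro t
    obtain ⟨p1, s1, p2, s2⟩ := hiter t
    obtain ⟨P1, S1, I1⟩ := sos_kl_update (π₁ t) π₁ref p1 h₁pos (γ t / η)
      (fun a₁ => γ t * ∑ a₂, π₂ t a₂ * Q (a₁, a₂)) (π₁ (t+1)) (h1step t)
    obtain ⟨P2, S2, I2⟩ := sos_kl_update (π₂ t) π₂ref p2 h₂pos (γ t / η)
      (fun a₂ => -(γ t) * ∑ a₁, π₁ t a₁ * Q (a₁, a₂)) (π₂ (t+1)) (h2step t)
    have hγpos : 0 < γ t := by rw [hγ]; positivity
    -- identity for player 1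
    have hid1 := I1 μhat hμs.1 hμs.2
    have hid2 := I2 νhat hνs.1 hνs.2
    have hgb1 := hgibbs1 (π₁ (t+1)) (fun a => (P1 a).le) S1
    have hgb2 := hgibbs2 (π₂ (t+1)) (fun a => (P2 a).le) S2
    -- nonnegativity of dropped KL terms
    have hKL1 : 0 ≤ KLdiv (π₁ (t+1)) μhat :=
      sos_kl_nonneg _ _ ⟨fun a => (P1 a).le, S1⟩ hμs.2 hμpos
    have hKL2 : 0 ≤ KLdiv (π₂ (t+1)) νhat :=
      sos_kl_nonneg _ _ ⟨fun a => (P2 a).le, S2⟩ hνs.2 hνpos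
    -- rewrite the f-sums
    have e1 : ∑ a, (μhat a - π₁ (t+1) a) * (γ t * ∑ a₂, π₂ t a₂ * Q (a, a₂))
        = γ t * ((∑ a, μhat a * (∑ a₂, π₂ t a₂ * Q (a, a₂)))
            - ∑ a, π₁ (t+1) a * (∑ a₂, π₂ t a₂ * Q (a, a₂))) := by
      rw [mul_sub, Finset.mul_sum, Finset.mul_sum, ← Finset.sum_sub_distrib]
      apply Finset.sum_congr rfl
      intro a _
      ring
    have e2 : ∑ a, (νhat a - π₂ (t+1) a) * (-(γ t) * ∑ a₁, π₁ t a₁ * Q (a₁, a))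
        = -(γ t * ((∑ a, νhat a * (∑ a₁, π₁ t a₁ * Q (a₁, a)))
            - ∑ a, π₂ (t+1) a * (∑ a₁, π₁ t a₁ * Q (a₁, a)))) := by
      rw [mul_sub, Finset.mul_sum, Finset.mul_sum, neg_sub, ← Finset.sum_sub_distrib]
      apply Finset.sum_congr rfl
      intro a _
      ring
    rw [e1] at hid1
    rw [e2] at hid2
    -- multiply identities by η and use η * (γ t / η) = γ t
    have hc : η * (γ t / η) = γ t := by field_simp
    have hc' : η * (1 - γ t / η) = η - γ t := by field_simp
    -- cross terms as double sums
    have cross1 : (∑ a, π₁ (t+1) a * (∑ a₂, π₂ t a₂ * Q (a, a₂)))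
        - (∑ a, μhat a * (∑ a₂, π₂ t a₂ * Q (a, a₂)))
        - ((∑ a, π₁ (t+1) a * q1hat a) - ∑ a, μhat a * q1hat a)
        = ∑ a₁, ∑ a₂, (π₁ (t+1) a₁ - μhat a₁) * (π₂ t a₂ - νhat a₂) * Q (a₁, a₂) := by
      rw [← hexp1 (fun a₁ => π₁ (t+1) a₁ - μhat a₁) (fun a₂ => π₂ t a₂ - νhat a₂)]
      rw [← Finset.sum_sub_distrib, ← Finset.sum_sub_distrib, ← Finset.sum_sub_distrib]
      apply Finset.sum_congr rfl
      intro a₁ _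
      have : (∑ a₂, (π₂ t a₂ - νhat a₂) * Q (a₁, a₂))
          = (∑ a₂, π₂ t a₂ * Q (a₁, a₂)) - q1hat a₁ := by
        rw [hq1hat, ← Finset.sum_sub_distrib]
        apply Finset.sum_congr rfl
        intro a₂ _
        ring
      rw [this]
      ring
    have cross2 : (∑ a, π₂ (t+1) a * (∑ a₁, π₁ t a₁ * Q (a₁, a)))
        - (∑ a, νhat a * (∑ a₁, π₁ t a₁ * Q (a₁, a)))
        - ((∑ a, π₂ (t+1) a * q2hat a) - ∑ a, νhat a * q2hat a)
        = ∑ a₁, ∑ a₂, (π₁ t a₁ - μhat a₁) * (π₂ (t+1) a₂ - νhat a₂) * Q (a₁, a₂) := by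
      rw [← hexp2 (fun a₁ => π₁ t a₁ - μhat a₁) (fun a₂ => π₂ (t+1) a₂ - νhat a₂)]
      rw [← Finset.sum_sub_distrib, ← Finset.sum_sub_distrib, ← Finset.sum_sub_distrib]
      apply Finset.sum_congr rfl
      intro a₂ _
      have : (∑ a₁, (π₁ t a₁ - μhat a₁) * Q (a₁, a₂))
          = (∑ a₁, π₁ t a₁ * Q (a₁, a₂)) - q2hat a₂ := by
        rw [hq2hat, ← Finset.sum_sub_distrib]
        apply Finset.sum_congr rfl
        intro a₁ _
        ring
      rw [this]
      ring
    -- combine everything linearly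
    have step3 : η * KLdiv μhat (π₁ (t+1))
        = (η - γ t) * (KLdiv μhat (π₁ t) - KLdiv (π₁ (t+1)) (π₁ t))
          - γ t * KLdiv (π₁ (t+1)) μhat
          + η * γ t * (∑ a₁, ∑ a₂, (π₁ (t+1) a₁ - μhat a₁) * (π₂ t a₂ - νhat a₂) * Q (a₁, a₂)) := by
      rw [← cross1, hid1, hgb1]
      field_simp
      ring
    have step4 : η * KLdiv νhat (π₂ (t+1))
        = (η - γ t) * (KLdiv νhat (π₂ t) - KLdiv (π₂ (t+1)) (π₂ t))
          - γ t * KLdiv (π₂ (t+1)) νhat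
          - η * γ t * (∑ a₁, ∑ a₂, (π₁ t a₁ - μhat a₁) * (π₂ (t+1) a₂ - νhat a₂) * Q (a₁, a₂)) := by
      rw [← cross2, hid2, hgb2]
      field_simp
      ring
    have hm1 := mul_nonneg hγpos.le hKL1
    have hm2 := mul_nonneg hγpos.le hKL2
    linarith
  -- bound on the first step : D 1 ≤ 16 η² B²
  have hD1 : KLdiv μhat (π₁ 1) + KLdiv νhat (π₂ 1) ≤ 16*η^2*B^2 := by
    have hγ0 : γ 0 = η := by rw [hγ]; norm_num
    have hm := master 0
    rw [hγ0] at hm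
    obtain ⟨P1, S1, P2, S2⟩ := hiter 1
    obtain ⟨P1', S1', P2', S2'⟩ := hiter 0
    set k1 := KLdiv μhat (π₁ 1) with hk1
    set k2 := KLdiv νhat (π₂ 1) with hk2
    have hs1c : (∑ a, |π₁ 1 a - μhat a|) = ∑ a, |μhat a - π₁ 1 a| := by
      apply Finset.sum_congr rfl; intro a _; rw [abs_sub_comm]
    have hs2c : (∑ a, |π₂ 1 a - νhat a|) = ∑ a, |νhat a - π₂ 1 a| := by
      apply Finset.sum_congr rfl; intro a _; rw [abs_sub_comm]
    set s1 := ∑ a, |μhat a - π₁ 1 a| with hs1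
    set s2 := ∑ a, |νhat a - π₂ 1 a| with hs2
    have hs1nn : 0 ≤ s1 := Finset.sum_nonneg (fun a _ => abs_nonneg _)
    have hs2nn : 0 ≤ s2 := Finset.sum_nonneg (fun a _ => abs_nonneg _)
    have hb1 : (∑ a₁, ∑ a₂, (π₁ 1 a₁ - μhat a₁) * (π₂ 0 a₂ - νhat a₂) * Q (a₁, a₂))
        ≤ 2 * B * s1 := by
      have h := hDSle (fun a₁ => π₁ 1 a₁ - μhat a₁) (fun a₂ => π₂ 0 a₂ - νhat a₂)
      have h2 : ∑ a₂, |π₂ 0 a₂ - νhat a₂| ≤ 2 :=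
        sos_l1_le_two _ _ (fun a => (P2' a).le) S2' hνs.1 hνs.2
      calc (∑ a₁, ∑ a₂, (π₁ 1 a₁ - μhat a₁) * (π₂ 0 a₂ - νhat a₂) * Q (a₁, a₂))
          ≤ |∑ a₁, ∑ a₂, (π₁ 1 a₁ - μhat a₁) * (π₂ 0 a₂ - νhat a₂) * Q (a₁, a₂)| := le_abs_self _
        _ ≤ B * (∑ a₁, |π₁ 1 a₁ - μhat a₁|) * (∑ a₂, |π₂ 0 a₂ - νhat a₂|) := h
        _ ≤ B * (∑ a₁, |π₁ 1 a₁ - μhat a₁|) * 2 := by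
            apply mul_le_mul_of_nonneg_left h2
            have : 0 ≤ ∑ a₁, |π₁ 1 a₁ - μhat a₁| :=
              Finset.sum_nonneg (fun a _ => abs_nonneg _)
            positivity
        _ = 2 * B * s1 := by rw [hs1c]; ring
    have hb2 : -(∑ a₁, ∑ a₂, (π₁ 0 a₁ - μhat a₁) * (π₂ 1 a₂ - νhat a₂) * Q (a₁, a₂))
        ≤ 2 * B * s2 := by
      have h := hDSle (fun a₁ => π₁ 0 a₁ - μhat a₁) (fun a₂ => π₂ 1 a₂ - νhat a₂)
      have h2 : ∑ a₁, |π₁ 0 a₁ - μhat a₁| ≤ 2 :=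
        sos_l1_le_two _ _ (fun a => (P1' a).le) S1' hμs.1 hμs.2
      calc -(∑ a₁, ∑ a₂, (π₁ 0 a₁ - μhat a₁) * (π₂ 1 a₂ - νhat a₂) * Q (a₁, a₂))
          ≤ |∑ a₁, ∑ a₂, (π₁ 0 a₁ - μhat a₁) * (π₂ 1 a₂ - νhat a₂) * Q (a₁, a₂)| := neg_le_abs _
        _ ≤ B * (∑ a₁, |π₁ 0 a₁ - μhat a₁|) * (∑ a₂, |π₂ 1 a₂ - νhat a₂|) := h
        _ ≤ B * 2 * (∑ a₂, |π₂ 1 a₂ - νhat a₂|) := by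
            apply mul_le_mul_of_nonneg_right (mul_le_mul_of_nonneg_left h2 hB)
            exact Finset.sum_nonneg (fun a _ => abs_nonneg _)
        _ = 2 * B * s2 := by rw [hs2c]; ring
    -- from hm : η*(k1+k2) ≤ (η-η)*... + η*η*(DS1 - DS2)
    have hkk : k1 + k2 ≤ η * (2*B*s1 + 2*B*s2) := by
      have m1 := mul_le_mul_of_nonneg_left hb1 (sq_nonneg η)
      have m2 := mul_le_mul_of_nonneg_left hb2 (sq_nonneg η)
      have h5 : η * (k1 + k2) ≤ η * (η * (2*B*s1 + 2*B*s2)) := by linarith [hm, m1, m2]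
      exact le_of_mul_le_mul_left h5 hη
    have hp1 : s1^2 ≤ 2 * k1 := sos_pinsker μhat (π₁ 1) hμs S1 P1
    have hp2 : s2^2 ≤ 2 * k2 := sos_pinsker νhat (π₂ 1) hνs S2 P2
    rcases eq_or_lt_of_le (add_nonneg hs1nn hs2nn) with hz | hz
    · have e1 : s1 = 0 := by linarith
      have e2 : s2 = 0 := by linarith
      rw [e1, e2] at hkk
      have : (0:ℝ) ≤ 16*η^2*B^2 := by positivity
      nlinarith [hkk]
    · have hs8 : s1 + s2 ≤ 8 * η * B := by
        have h6 : (s1+s2) * (s1+s2) ≤ (8*η*B) * (s1+s2) := by nlinarith [sq_nonneg (s1-s2)]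
        exact le_of_mul_le_mul_right h6 hz
      have m3 := mul_le_mul_of_nonneg_left hs8 (by positivity : (0:ℝ) ≤ 2*η*B)
      linarith [hkk, m3]
  -- one-step recursion for t ≥ 1
  have stepM : ∀ t : ℕ, 1 ≤ t →
      (t:ℝ)*((t:ℝ)+2) * (KLdiv μhat (π₁ (t+1)) + KLdiv νhat (π₂ (t+1)))
        ≤ (t:ℝ)^2 * (KLdiv μhat (π₁ t) + KLdiv νhat (π₂ t)) + 16*η^2*B^2 := by
    intro t ht
    have hτ1 : (1:ℝ) ≤ (t:ℝ) := by exact_mod_cast ht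
    have hτ0 : (0:ℝ) < (t:ℝ) := lt_of_lt_of_le one_pos hτ1
    have hτ2 : (0:ℝ) < (t:ℝ)+2 := by linarith
    have hm := master t
    obtain ⟨P1, S1, P2, S2⟩ := hiter (t+1)
    obtain ⟨P1', S1', P2', S2'⟩ := hiter t
    -- rearrange the cross term
    have hz : ∑ a₁, ∑ a₂, ((π₁ (t+1) a₁ - μhat a₁) * (π₂ t a₂ - νhat a₂) * Q (a₁, a₂)
        - (π₁ t a₁ - μhat a₁) * (π₂ (t+1) a₂ - νhat a₂) * Q (a₁, a₂)
        - ((π₁ (t+1) a₁ - π₁ t a₁) * (π₂ t a₂ - νhat a₂) * Q (a₁, a₂)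
          - (π₁ t a₁ - μhat a₁) * (π₂ (t+1) a₂ - π₂ t a₂) * Q (a₁, a₂)))
        = 0 :=
      Finset.sum_eq_zero (fun a₁ _ => Finset.sum_eq_zero (fun a₂ _ => by ring))
    simp only [Finset.sum_sub_distrib] at hz
    set d1 := ∑ a, |π₁ (t+1) a - π₁ t a| with hd1
    set d2 := ∑ a, |π₂ (t+1) a - π₂ t a| with hd2
    have hd1nn : 0 ≤ d1 := Finset.sum_nonneg (fun a _ => abs_nonneg _)
    have hd2nn : 0 ≤ d2 := Finset.sum_nonneg (fun a _ => abs_nonneg _)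
    have hb1 : (∑ a₁, ∑ a₂, (π₁ (t+1) a₁ - π₁ t a₁) * (π₂ t a₂ - νhat a₂) * Q (a₁, a₂))
        ≤ 2 * B * d1 := by
      have h := hDSle (fun a₁ => π₁ (t+1) a₁ - π₁ t a₁) (fun a₂ => π₂ t a₂ - νhat a₂)
      have h2 : ∑ a₂, |π₂ t a₂ - νhat a₂| ≤ 2 :=
        sos_l1_le_two _ _ (fun a => (P2' a).le) S2' hνs.1 hνs.2
      calc (∑ a₁, ∑ a₂, (π₁ (t+1) a₁ - π₁ t a₁) * (π₂ t a₂ - νhat a₂) * Q (a₁, a₂))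
          ≤ |∑ a₁, ∑ a₂, (π₁ (t+1) a₁ - π₁ t a₁) * (π₂ t a₂ - νhat a₂) * Q (a₁, a₂)| :=
            le_abs_self _
        _ ≤ B * d1 * (∑ a₂, |π₂ t a₂ - νhat a₂|) := h
        _ ≤ B * d1 * 2 := by
            apply mul_le_mul_of_nonneg_left h2
            positivity
        _ = 2 * B * d1 := by ring
    have hb2 : -(∑ a₁, ∑ a₂, (π₁ t a₁ - μhat a₁) * (π₂ (t+1) a₂ - π₂ t a₂) * Q (a₁, a₂))
        ≤ 2 * B * d2 := by
      have h := hDSle (fun a₁ => π₁ t a₁ - μhat a₁) (fun a₂ => π₂ (t+1) a₂ - π₂ t a₂)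
      have h2 : ∑ a₁, |π₁ t a₁ - μhat a₁| ≤ 2 :=
        sos_l1_le_two _ _ (fun a => (P1' a).le) S1' hμs.1 hμs.2
      calc -(∑ a₁, ∑ a₂, (π₁ t a₁ - μhat a₁) * (π₂ (t+1) a₂ - π₂ t a₂) * Q (a₁, a₂))
          ≤ |∑ a₁, ∑ a₂, (π₁ t a₁ - μhat a₁) * (π₂ (t+1) a₂ - π₂ t a₂) * Q (a₁, a₂)| :=
            neg_le_abs _
        _ ≤ B * (∑ a₁, |π₁ t a₁ - μhat a₁|) * d2 := h
        _ ≤ B * 2 * d2 := by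
            apply mul_le_mul_of_nonneg_right (mul_le_mul_of_nonneg_left h2 hB) hd2nn
        _ = 2 * B * d2 := by ring
    have hP1 : d1^2 ≤ 2 * KLdiv (π₁ (t+1)) (π₁ t) :=
      sos_pinsker (π₁ (t+1)) (π₁ t) ⟨fun a => (P1 a).le, S1⟩ S1' P1'
    have hP2 : d2^2 ≤ 2 * KLdiv (π₂ (t+1)) (π₂ t) :=
      sos_pinsker (π₂ (t+1)) (π₂ t) ⟨fun a => (P2 a).le, S2⟩ S2' P2'
    -- multiply master by t(t+2) and cancel η
    have hRw : (t:ℝ)*((t:ℝ)+2)*((η - γ t) * (KLdiv μhat (π₁ t) + KLdiv νhat (π₂ t))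
          - (η - γ t) * (KLdiv (π₁ (t+1)) (π₁ t) + KLdiv (π₂ (t+1)) (π₂ t))
          + η * γ t *
            ((∑ a₁, ∑ a₂, (π₁ (t+1) a₁ - μhat a₁) * (π₂ t a₂ - νhat a₂) * Q (a₁, a₂))
             - ∑ a₁, ∑ a₂, (π₁ t a₁ - μhat a₁) * (π₂ (t+1) a₂ - νhat a₂) * Q (a₁, a₂)))
        = η * ((t:ℝ)^2 * (KLdiv μhat (π₁ t) + KLdiv νhat (π₂ t))
          - (t:ℝ)^2 * (KLdiv (π₁ (t+1)) (π₁ t) + KLdiv (π₂ (t+1)) (π₂ t))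
          + 2*(t:ℝ)*η *
            ((∑ a₁, ∑ a₂, (π₁ (t+1) a₁ - μhat a₁) * (π₂ t a₂ - νhat a₂) * Q (a₁, a₂))
             - ∑ a₁, ∑ a₂, (π₁ t a₁ - μhat a₁) * (π₂ (t+1) a₂ - νhat a₂) * Q (a₁, a₂))) := by
      rw [hγ t]
      field_simp
      ring
    have hm3 : η * ((t:ℝ)*((t:ℝ)+2) * (KLdiv μhat (π₁ (t+1)) + KLdiv νhat (π₂ (t+1))))
        ≤ η * ((t:ℝ)^2 * (KLdiv μhat (π₁ t) + KLdiv νhat (π₂ t))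
          - (t:ℝ)^2 * (KLdiv (π₁ (t+1)) (π₁ t) + KLdiv (π₂ (t+1)) (π₂ t))
          + 2*(t:ℝ)*η *
            ((∑ a₁, ∑ a₂, (π₁ (t+1) a₁ - μhat a₁) * (π₂ t a₂ - νhat a₂) * Q (a₁, a₂))
             - ∑ a₁, ∑ a₂, (π₁ t a₁ - μhat a₁) * (π₂ (t+1) a₂ - νhat a₂) * Q (a₁, a₂))) := by
      rw [← hRw]
      calc η * ((t:ℝ)*((t:ℝ)+2) * (KLdiv μhat (π₁ (t+1)) + KLdiv νhat (π₂ (t+1))))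
          = (t:ℝ)*((t:ℝ)+2) * (η * (KLdiv μhat (π₁ (t+1)) + KLdiv νhat (π₂ (t+1)))) := by ring
        _ ≤ (t:ℝ)*((t:ℝ)+2)*((η - γ t) * (KLdiv μhat (π₁ t) + KLdiv νhat (π₂ t))
            - (η - γ t) * (KLdiv (π₁ (t+1)) (π₁ t) + KLdiv (π₂ (t+1)) (π₂ t))
            + η * γ t *
              ((∑ a₁, ∑ a₂, (π₁ (t+1) a₁ - μhat a₁) * (π₂ t a₂ - νhat a₂) * Q (a₁, a₂))
               - ∑ a₁, ∑ a₂, (π₁ t a₁ - μhat a₁) * (π₂ (t+1) a₂ - νhat a₂) * Q (a₁, a₂))) :=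
            mul_le_mul_of_nonneg_left hm (by positivity)
    have hcanc := le_of_mul_le_mul_left hm3 hη
    -- bound the cross term
    have hcr : 2*(t:ℝ)*η *
        ((∑ a₁, ∑ a₂, (π₁ (t+1) a₁ - μhat a₁) * (π₂ t a₂ - νhat a₂) * Q (a₁, a₂))
         - ∑ a₁, ∑ a₂, (π₁ t a₁ - μhat a₁) * (π₂ (t+1) a₂ - νhat a₂) * Q (a₁, a₂))
        ≤ (t:ℝ)^2 * (KLdiv (π₁ (t+1)) (π₁ t) + KLdiv (π₂ (t+1)) (π₂ t)) + 16*η^2*B^2 := by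
      have hcrs : (∑ a₁, ∑ a₂, (π₁ (t+1) a₁ - μhat a₁) * (π₂ t a₂ - νhat a₂) * Q (a₁, a₂))
          - (∑ a₁, ∑ a₂, (π₁ t a₁ - μhat a₁) * (π₂ (t+1) a₂ - νhat a₂) * Q (a₁, a₂))
          ≤ 2*B*d1 + 2*B*d2 := by linarith
      nlinarith [sq_nonneg ((t:ℝ)*d1 - 4*η*B), sq_nonneg ((t:ℝ)*d2 - 4*η*B),
        mul_le_mul_of_nonneg_left hP1 (sq_nonneg (t:ℝ)),
        mul_le_mul_of_nonneg_left hP2 (sq_nonneg (t:ℝ)),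
        mul_le_mul_of_nonneg_left hcrs (by positivity : (0:ℝ) ≤ 2*(t:ℝ)*η),
        mul_pos hτ0 hη]
    linarith
  -- solve the recursion
  have hrec : ∀ t : ℕ, 1 ≤ t →
      (t:ℝ)*((t:ℝ)+1) * (KLdiv μhat (π₁ t) + KLdiv νhat (π₂ t)) ≤ 32*η^2*B^2*(t:ℝ) := by
    intro t ht
    induction t, ht using Nat.le_induction with
    | base =>
      norm_num
      linarith [hD1]
    | succ n hn ih =>
      have hτ1 : (1:ℝ) ≤ (n:ℝ) := by exact_mod_cast hn
      have hτ0 : (0:ℝ) < (n:ℝ) := lt_of_lt_of_le one_pos hτ1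
      have hS := stepM n hn
      have key : (n:ℝ) * (((n:ℝ)+1)*((n:ℝ)+2) * (KLdiv μhat (π₁ (n+1)) + KLdiv νhat (π₂ (n+1))))
          ≤ (n:ℝ) * (32*η^2*B^2*((n:ℝ)+1)) := by
        nlinarith [mul_le_mul_of_nonneg_left hS (by linarith : (0:ℝ) ≤ (n:ℝ)+1),
          mul_le_mul_of_nonneg_left ih hτ0.le,
          mul_nonneg (sq_nonneg (η*B)) (sub_nonneg.2 hτ1)]
      have key2 := le_of_mul_le_mul_left key hτ0
      push_cast
      nlinarith [key2]
  -- final assembly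
  intro T hT
  have hτ1 : (1:ℝ) ≤ (T:ℝ) := by exact_mod_cast hT
  have hτp1 : (0:ℝ) < (T:ℝ)+1 := by linarith
  obtain ⟨P1, S1, P2, S2⟩ := hiter T
  have hDT : KLdiv μhat (π₁ T) + KLdiv νhat (π₂ T) ≤ 32*η^2*B^2/((T:ℝ)+1) := by
    rw [le_div_iff₀ hτp1]
    have h := hrec T hT
    have hτ0 : (0:ℝ) < (T:ℝ) := by linarith
    have h2 : (T:ℝ) * (((T:ℝ)+1) * (KLdiv μhat (π₁ T) + KLdiv νhat (π₂ T)))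
        ≤ (T:ℝ) * (32*η^2*B^2) := by
      calc (T:ℝ) * (((T:ℝ)+1) * (KLdiv μhat (π₁ T) + KLdiv νhat (π₂ T)))
          = (T:ℝ)*((T:ℝ)+1) * (KLdiv μhat (π₁ T) + KLdiv νhat (π₂ T)) := by ring
        _ ≤ 32*η^2*B^2*(T:ℝ) := h
        _ = (T:ℝ) * (32*η^2*B^2) := by ring
    have h3 := le_of_mul_le_mul_left h2 hτ0
    linarith
  have hp1 : (∑ a₁, |μhat a₁ - π₁ T a₁|)^2 ≤ 2 * KLdiv μhat (π₁ T) :=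
    sos_pinsker μhat (π₁ T) hμs S1 P1
  have hp2 : (∑ a₂, |νhat a₂ - π₂ T a₂|)^2 ≤ 2 * KLdiv νhat (π₂ T) :=
    sos_pinsker νhat (π₂ T) hνs S2 P2
  have hs1nn : 0 ≤ ∑ a₁, |μhat a₁ - π₁ T a₁| := Finset.sum_nonneg (fun a _ => abs_nonneg _)
  have hs2nn : 0 ≤ ∑ a₂, |νhat a₂ - π₂ T a₂| := Finset.sum_nonneg (fun a _ => abs_nonneg _)
  have hsq : ((∑ a₁, |μhat a₁ - π₁ T a₁|) + (∑ a₂, |νhat a₂ - π₂ T a₂|))^2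
      ≤ 128*η^2*B^2/((T:ℝ)+1) := by
    have h4 : ((∑ a₁, |μhat a₁ - π₁ T a₁|) + (∑ a₂, |νhat a₂ - π₂ T a₂|))^2
        ≤ 4 * (KLdiv μhat (π₁ T) + KLdiv νhat (π₂ T)) := by
      nlinarith [sq_nonneg ((∑ a₁, |μhat a₁ - π₁ T a₁|) - (∑ a₂, |νhat a₂ - π₂ T a₂|))]
    have h5 : 4 * (KLdiv μhat (π₁ T) + KLdiv νhat (π₂ T)) ≤ 128*η^2*B^2/((T:ℝ)+1) := by
      have := hDT
      have heq : 4 * (32*η^2*B^2/((T:ℝ)+1)) = 128*η^2*B^2/((T:ℝ)+1) := by ring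
      linarith
    linarith
  have hsqrtpos : 0 < Real.sqrt ((T:ℝ)+1) := Real.sqrt_pos.2 hτp1
  have hRHS0 : 0 ≤ 12*η*B/Real.sqrt ((T:ℝ)+1) := by positivity
  have hRHSsq : (12*η*B/Real.sqrt ((T:ℝ)+1))^2 = 144*η^2*B^2/((T:ℝ)+1) := by
    rw [div_pow, Real.sq_sqrt hτp1.le]
    ring
  have hx : 0 ≤ η^2*B^2/((T:ℝ)+1) := by positivity
  calc (∑ a₁, |μhat a₁ - π₁ T a₁|) + (∑ a₂, |νhat a₂ - π₂ T a₂|)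
      = Real.sqrt (((∑ a₁, |μhat a₁ - π₁ T a₁|) + (∑ a₂, |νhat a₂ - π₂ T a₂|))^2) :=
        (Real.sqrt_sq (by positivity)).symm
    _ ≤ Real.sqrt ((12*η*B/Real.sqrt ((T:ℝ)+1))^2) := by
        apply Real.sqrt_le_sqrt
        rw [hRHSsq]
        have h9 : 128*η^2*B^2/((T:ℝ)+1) ≤ 144*η^2*B^2/((T:ℝ)+1) := by
          gcongr
          nlinarith [sq_nonneg (η*B)]
        linarith [hsq, h9]
    _ = 12*η*B/Real.sqrt ((T:ℝ)+1) := Real.sqrt_sq hRHS0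
end

section
/- Let (Ω, ℱ, P) be a probability space, Z a measurable space, μ a probability measure on Z, and z₁, …, z_n : Ω → Z i.i.d. random variables with common distribution μ. Let 𝒬 be a finite nonempty set of measurable functions Z → ℝ, each bounded in absolute value by C > 0, and let δ ∈ (0,1). Then with probability at least 1 − δ, simultaneously for all Q₁, Q₂ ∈ 𝒬: ∫ (Q₁ − Q₂)² dμ ≤ (2/n)·Σ_{i=1}^n (Q₁(zᵢ) − Q₂(zᵢ))² + (80·C²/(3n))·log(2·|𝒬|/δ). -/
open Finset MeasureTheory ProbabilityTheory

lemma exp_neg_le_quad (x : ℝ) (hx : 0 ≤ x) : Real.exp (-x) ≤ 1 - x + x^2/2 := by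
  have key : 1 ≤ Real.exp x * (1 - x + x^2/2) := by
    set f : ℝ → ℝ := fun t => Real.exp t * (1 - t + t^2/2) with hf
    have hderiv : ∀ t : ℝ, HasDerivAt f (Real.exp t * (t^2/2)) t := by
      intro t
      have h1 : HasDerivAt (fun t : ℝ => 1 - t + t^2/2) (-1 + t) t := by
        have : HasDerivAt (fun t : ℝ => 1 - t + t^2/2) (0 - 1 + 2 * t^1 / 2) t := by
          exact (((hasDerivAt_const t (1:ℝ)).sub (hasDerivAt_id t)).add
            ((hasDerivAt_pow 2 t).div_const 2))
        convert this using 1; ring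
      have := (Real.hasDerivAt_exp t).mul h1
      exact this.congr_deriv (by ring)
    have hmono : MonotoneOn f (Set.Ici 0) := by
      exact monotoneOn_of_deriv_nonneg (convex_Ici 0)
        ((Real.continuous_exp.mul (by continuity)).continuousOn)
        (fun t _ => (hderiv t).differentiableAt.differentiableWithinAt)
        (fun t _ => by rw [(hderiv t).deriv]; positivity)
    have h0 : f 0 = 1 := by simp [hf]
    calc (1:ℝ) = f 0 := h0.symm
      _ ≤ f x := hmono Set.self_mem_Ici hx hx
  have hm : Real.exp (-x) * Real.exp x = 1 := by rw [← Real.exp_add]; simp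
  nlinarith [Real.exp_pos x, (Real.exp_pos (-x)).le, key, hm]

lemma lowertail {Ω : Type*} [MeasurableSpace Ω] (P : Measure Ω) [IsProbabilityMeasure P]
    {Z : Type*} [MeasurableSpace Z] (μ : Measure Z) [IsProbabilityMeasure μ]
    (n : ℕ) (hn : 0 < n) (z : Fin n → Ω → Z)
    (hmeas : ∀ i, Measurable (z i))
    (hindep : iIndepFun z P)
    (hlaw : ∀ i, Measure.map (z i) P = μ)
    (W : Z → ℝ) (hW : Measurable W) (B : ℝ) (hB : 0 < B)
    (hW0 : ∀ x, 0 ≤ W x) (hWB : ∀ x, W x ≤ B)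
    (L : ℝ) (hL : 0 < L) :
    P {ω | ∫ x, W x ∂μ > (2 / (n : ℝ)) * ∑ i, W (z i ω) + 2 * B * L / n} ≤
      ENNReal.ofReal (Real.exp (-L)) := by
  have hn' : (0:ℝ) < n := by exact_mod_cast hn
  have hWint : Integrable W μ := by
    refine Integrable.mono' (integrable_const B) hW.aestronglyMeasurable ?_
    filter_upwards with x
    rw [Real.norm_eq_abs, abs_of_nonneg (hW0 x)]; exact hWB x
  have hW2int : Integrable (fun x => W x ^ 2) μ := by
    refine Integrable.mono' (integrable_const (B^2)) (hW.pow_const 2).aestronglyMeasurable ?_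
    filter_upwards with x
    rw [Real.norm_eq_abs, abs_of_nonneg (sq_nonneg _)]
    exact pow_le_pow_left₀ (hW0 x) (hWB x) 2
  set m := ∫ x, W x ∂μ with hmdef
  have hm0 : 0 ≤ m := integral_nonneg hW0
  rcases eq_or_lt_of_le hm0 with hm | hm
  · have hempty : {ω | m > (2 / (n : ℝ)) * ∑ i, W (z i ω) + 2 * B * L / n} = ∅ := by
      ext ω
      simp only [Set.mem_setOf_eq, Set.mem_empty_iff_false, iff_false, not_lt]
      have hsum : 0 ≤ ∑ i, W (z i ω) := Finset.sum_nonneg fun i _ => hW0 _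
      have : (0:ℝ) < 2 * B * L / n := by positivity
      nlinarith [mul_nonneg (by positivity : (0:ℝ) ≤ 2 / (n:ℝ)) hsum]
    rw [hempty, measure_empty]; exact zero_le
  · clear_value m
    set v := ∫ x, W x ^ 2 ∂μ with hvdef
    have hv_nonneg : 0 ≤ v := integral_nonneg fun x => sq_nonneg _
    have hv_le : v ≤ B * m := by
      have h1 : ∫ x, W x ^ 2 ∂μ ≤ ∫ x, B * W x ∂μ := by
        refine integral_mono hW2int (hWint.const_mul B) fun x => ?_
        nlinarith [hW0 x, hWB x]
      rw [integral_const_mul] at h1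
      rw [hvdef, hmdef]; exact h1
    have hv0 : 0 < v := by
      rcases eq_or_lt_of_le hv_nonneg with hv | hv
      · exfalso
        have h0 : (fun x => W x ^ 2) =ᵐ[μ] 0 :=
          (integral_eq_zero_iff_of_nonneg (fun x => sq_nonneg _) hW2int).mp hv.symm
        have hW_ae : W =ᵐ[μ] 0 := by
          filter_upwards [h0] with x hx
          simpa using pow_eq_zero_iff (n := 2) (by norm_num) |>.mp hx
        have : m = 0 := by
          rw [hmdef, integral_congr_ae hW_ae]; simp
        linarith
      · exact hv
    set t := m / 2 + B * L / n with htdef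
    set s := t / v with hsdef
    clear_value v
    clear_value t
    clear_value s
    have ht : 0 < t := by rw [htdef]; positivity
    have hs : 0 < s := by rw [hsdef]; exact div_pos ht hv0
    set Y : Fin n → Ω → ℝ := fun i ω => -(W (z i ω)) with hYdef
    have hYmeas : ∀ i, Measurable (Y i) := fun i => (hW.comp (hmeas i)).neg
    have hYindep : iIndepFun Y P :=
      hindep.comp (fun _ x => -(W x)) (fun _ => hW.neg)
    have hsub : {ω | m > (2 / (n : ℝ)) * ∑ i, W (z i ω) + 2 * B * L / n} ⊆
        {ω | (n:ℝ) * t - n * m ≤ ∑ i, Y i ω} := by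
      intro ω hω
      simp only [Set.mem_setOf_eq] at hω ⊢
      have hsum : ∑ i, Y i ω = -∑ i, W (z i ω) := by
        simp [hYdef]
      rw [hsum]
      have e1 : (2 / (n:ℝ)) * ∑ i, W (z i ω) + 2 * B * L / n
          = (2 * ∑ i, W (z i ω) + 2 * B * L) / n := by ring
      rw [e1] at hω
      have h3 : 2 * ∑ i, W (z i ω) + 2 * B * L < m * n := (div_lt_iff₀ hn').mp hω
      have e2 : (n:ℝ) * t = n * m / 2 + B * L := by
        rw [htdef]; field_simp
      linarith
    refine (measure_mono hsub).trans ?_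
    have hXmeas : Measurable (fun ω => ∑ i, Y i ω) :=
      Finset.measurable_sum Finset.univ fun i _ => hYmeas i
    have hint : Integrable (fun ω => Real.exp (s * ∑ i, Y i ω)) P := by
      refine Integrable.mono' (integrable_const 1)
        ((hXmeas.const_mul s).exp).aestronglyMeasurable ?_
      filter_upwards with ω
      rw [Real.norm_eq_abs, abs_of_nonneg (Real.exp_pos _).le, Real.exp_le_one_iff]
      have : ∑ i, Y i ω ≤ 0 := Finset.sum_nonpos fun i _ => neg_nonpos.mpr (hW0 _)
      exact mul_nonpos_of_nonneg_of_nonpos hs.le this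
    have chern := measure_ge_le_exp_mul_mgf (μ := P) (X := fun ω => ∑ i, Y i ω)
      ((n:ℝ) * t - n * m) hs.le hint
    -- mgf of sum
    have hsum_fn : (fun ω => ∑ i, Y i ω) = ∑ i, Y i := by
      funext ω; simp
    have hmgf_sum : mgf (fun ω => ∑ i, Y i ω) P s = ∏ i, mgf (Y i) P s := by
      rw [hsum_fn]; exact hYindep.mgf_sum hYmeas Finset.univ
    have hone : ∀ i : Fin n, mgf (Y i) P s ≤ Real.exp (s^2 * v / 2 - s * m) := by
      intro i
      have hmgf_eq : mgf (Y i) P s = ∫ x, Real.exp (s * -(W x)) ∂μ := by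
        have : mgf (Y i) P s = ∫ ω, Real.exp (s * Y i ω) ∂P := rfl
        rw [this, ← hlaw i, integral_map (hmeas i).aemeasurable]
        exact ((hW.neg.const_mul s).exp).aestronglyMeasurable
      rw [hmgf_eq]
      have hint1 : Integrable (fun x => Real.exp (s * -(W x))) μ := by
        refine Integrable.mono' (integrable_const 1)
          ((hW.neg.const_mul s).exp).aestronglyMeasurable ?_
        filter_upwards with x
        rw [Real.norm_eq_abs, abs_of_nonneg (Real.exp_pos _).le, Real.exp_le_one_iff]
        exact mul_nonpos_of_nonneg_of_nonpos hs.le (neg_nonpos.mpr (hW0 x))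
      have ia : Integrable (fun x => 1 - s * W x) μ := by
        exact (integrable_const 1).sub (hWint.const_mul s)
      have ib : Integrable (fun x => s^2/2 * W x ^ 2) μ := hW2int.const_mul (s^2/2)
      have hint2 : Integrable (fun x => 1 - s * W x + s^2/2 * W x ^ 2) μ := ia.add ib
      calc ∫ x, Real.exp (s * -(W x)) ∂μ
          ≤ ∫ x, (1 - s * W x + s^2/2 * W x ^ 2) ∂μ := by
            refine integral_mono hint1 hint2 fun x => ?_
            have h := exp_neg_le_quad (s * W x) (mul_nonneg hs.le (hW0 x))
            have e : s * -(W x) = -(s * W x) := by ring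
            rw [e]
            calc Real.exp (-(s * W x)) ≤ 1 - s * W x + (s * W x)^2/2 := h
              _ = 1 - s * W x + s^2/2 * W x ^ 2 := by ring
        _ = 1 - s * m + s^2/2 * v := by
            rw [integral_add ia ib, integral_sub (integrable_const 1) (hWint.const_mul s),
              integral_const, integral_const_mul, integral_const_mul, ← hmdef, ← hvdef]
            simp
        _ ≤ Real.exp (s^2 * v / 2 - s * m) := by
            have := Real.add_one_le_exp (s^2 * v / 2 - s * m)
            linarith
    have hprod : ∏ i : Fin n, mgf (Y i) P s ≤ Real.exp ((n:ℝ) * (s^2 * v / 2 - s * m)) := by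
      calc ∏ i : Fin n, mgf (Y i) P s ≤ ∏ _i : Fin n, Real.exp (s^2 * v / 2 - s * m) :=
            Finset.prod_le_prod (fun i _ => mgf_nonneg) (fun i _ => hone i)
        _ = Real.exp ((n:ℝ) * (s^2 * v / 2 - s * m)) := by
            rw [Finset.prod_const, Finset.card_univ, Fintype.card_fin, ← Real.exp_nat_mul]
    have hto : (P {ω | (n:ℝ) * t - n * m ≤ ∑ i, Y i ω}).toReal ≤ Real.exp (-L) := by
      refine chern.trans ?_
      rw [hmgf_sum]
      calc Real.exp (-s * ((n:ℝ) * t - n * m)) * ∏ i, mgf (Y i) P s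
          ≤ Real.exp (-s * ((n:ℝ) * t - n * m)) * Real.exp ((n:ℝ) * (s^2 * v / 2 - s * m)) := by
            exact mul_le_mul_of_nonneg_left hprod (Real.exp_pos _).le
        _ = Real.exp (-s * ((n:ℝ) * t - n * m) + (n:ℝ) * (s^2 * v / 2 - s * m)) := by
            rw [← Real.exp_add]
        _ ≤ Real.exp (-L) := by
            rw [Real.exp_le_exp]
            have hE : -s * ((n:ℝ) * t - n * m) + (n:ℝ) * (s^2 * v / 2 - s * m)
                = -((n:ℝ) * t^2 / (2 * v)) := by
              rw [hsdef]; field_simp; ring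
            rw [hE]
            have key : 2 * v * L ≤ (n:ℝ) * t^2 := by
              have h1 : (n:ℝ) * t^2 = n * m^2/4 + m * B * L + B^2 * L^2 / n := by
                rw [htdef]; field_simp; ring
              have h2 : (0:ℝ) ≤ (n:ℝ) * (m/2 - B * L / n)^2 := by positivity
              have h3 : (n:ℝ) * (m/2 - B * L / n)^2
                  = n * m^2/4 - m * B * L + B^2 * L^2 / n := by
                field_simp; ring
              have h4 : v * L ≤ B * m * L :=
                mul_le_mul_of_nonneg_right hv_le hL.le
              linarith
            have : L ≤ (n:ℝ) * t^2 / (2 * v) := by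
              rw [le_div_iff₀ (by positivity)]; linarith
            linarith
    have hfin : P {ω | (n:ℝ) * t - n * m ≤ ∑ i, Y i ω} ≠ ⊤ := measure_ne_top _ _
    rw [← ENNReal.ofReal_toReal hfin]
    exact ENNReal.ofReal_le_ofReal hto


/-- uniform Bernstein-type concentration for squared differences over a
finite function class: with probability at least `1 − δ`, simultaneously for all
`Q₁, Q₂ ∈ 𝒬`, the population squared difference is bounded by twice the empirical one
plus `(80 C²/(3n)) log(2|𝒬|/δ)`. -/
theorem stmt18 {Ω : Type*} [MeasurableSpace Ω] (P : Measure Ω) [IsProbabilityMeasure P]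
    {Z : Type*} [MeasurableSpace Z] (μ : Measure Z) [IsProbabilityMeasure μ]
    (n : ℕ) (hn : 0 < n) (z : Fin n → Ω → Z)
    (hmeas : ∀ i, Measurable (z i))
    (hindep : iIndepFun z P)
    (hlaw : ∀ i, Measure.map (z i) P = μ)
    (𝒬 : Finset (Z → ℝ)) (h𝒬 : 𝒬.Nonempty)
    (h𝒬meas : ∀ Q ∈ 𝒬, Measurable Q)
    (C : ℝ) (hC : 0 < C) (hbdd : ∀ Q ∈ 𝒬, ∀ x, |Q x| ≤ C)
    (δ : ℝ) (hδ0 : 0 < δ) (hδ1 : δ < 1) :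
    ENNReal.ofReal (1 - δ) ≤
      P {ω | ∀ Q₁ ∈ 𝒬, ∀ Q₂ ∈ 𝒬,
        (∫ x, (Q₁ x - Q₂ x)^2 ∂μ)
          ≤ (2 / (n : ℝ)) * ∑ i, (Q₁ (z i ω) - Q₂ (z i ω))^2
            + (80 * C^2 / (3 * (n : ℝ))) * Real.log (2 * (𝒬.card : ℝ) / δ)} := by
  have hn' : (0:ℝ) < n := by exact_mod_cast hn
  set N : ℝ := (𝒬.card : ℝ) with hNdef
  have hN1 : (1:ℝ) ≤ N := by
    rw [hNdef]; exact_mod_cast Finset.card_pos.mpr h𝒬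
  have hN0 : (0:ℝ) < N := lt_of_lt_of_le one_pos hN1
  set L : ℝ := Real.log (N^2 / δ) with hLdef
  have hlogN : 0 ≤ Real.log N := Real.log_nonneg hN1
  have hlogδ : Real.log δ < 0 := Real.log_neg hδ0 hδ1
  have hLsplit : L = 2 * Real.log N - Real.log δ := by
    rw [hLdef, Real.log_div (by positivity) (ne_of_gt hδ0), Real.log_pow]
    push_cast; ring
  have hL : 0 < L := by rw [hLsplit]; linarith
  have hlog2N : Real.log (2 * N / δ) = Real.log 2 + Real.log N - Real.log δ := by
    rw [Real.log_div (by positivity) (ne_of_gt hδ0),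
      Real.log_mul (by norm_num) (ne_of_gt hN0)]
  have hlog2 : (0:ℝ) ≤ Real.log 2 := Real.log_nonneg one_le_two
  set ρ : ℝ := (80 * C^2 / (3 * (n : ℝ))) * Real.log (2 * N / δ) with hρdef
  have hρ_ge : 2 * (4 * C^2) * L / n ≤ ρ := by
    have h24 : 24 * L ≤ 80 * Real.log (2 * N / δ) := by
      rw [hLsplit, hlog2N]; linarith
    have hid : ρ - 2 * (4 * C^2) * L / n
        = (C^2 / (3 * (n:ℝ))) * (80 * Real.log (2 * N / δ) - 24 * L) := by
      rw [hρdef]; field_simp; ring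
    nlinarith [mul_nonneg (le_of_lt (by positivity : (0:ℝ) < C^2 / (3 * (n:ℝ))))
      (by linarith : (0:ℝ) ≤ 80 * Real.log (2 * N / δ) - 24 * L)]
  -- per-pair bad sets
  set bad : ((Z → ℝ) × (Z → ℝ)) → Set Ω := fun p =>
    {ω | ∫ x, (p.1 x - p.2 x)^2 ∂μ >
      (2 / (n : ℝ)) * ∑ i, (p.1 (z i ω) - p.2 (z i ω))^2 + ρ} with hbaddef
  have hbad_bound : ∀ p ∈ 𝒬 ×ˢ 𝒬, P (bad p) ≤ ENNReal.ofReal (δ / N^2) := by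
    intro p hp
    rw [Finset.mem_product] at hp
    set W : Z → ℝ := fun x => (p.1 x - p.2 x)^2 with hWdef
    have hWmeas : Measurable W :=
      (((h𝒬meas p.1 hp.1).sub (h𝒬meas p.2 hp.2)).pow_const 2)
    have hW0 : ∀ x, 0 ≤ W x := fun x => sq_nonneg _
    have hWB : ∀ x, W x ≤ 4 * C^2 := by
      intro x
      have h1 := hbdd p.1 hp.1 x
      have h2 := hbdd p.2 hp.2 x
      have a1 := abs_le.mp h1
      have a2 := abs_le.mp h2
      show (p.1 x - p.2 x)^2 ≤ 4 * C^2
      nlinarith [sq_nonneg (p.1 x + p.2 x), a1.1, a1.2, a2.1, a2.2]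
    have hkey := lowertail P μ n hn z hmeas hindep hlaw W hWmeas (4 * C^2)
      (by positivity) hW0 hWB L hL
    have hsub : bad p ⊆
        {ω | ∫ x, W x ∂μ > (2 / (n : ℝ)) * ∑ i, W (z i ω) + 2 * (4 * C^2) * L / n} := by
      intro ω hω
      simp only [hbaddef, hWdef, Set.mem_setOf_eq] at hω ⊢
      linarith
    have hexp : Real.exp (-L) = δ / N^2 := by
      rw [hLdef, ← Real.log_inv, Real.exp_log (by positivity), inv_div]
    calc P (bad p) ≤ _ := measure_mono hsub
      _ ≤ ENNReal.ofReal (Real.exp (-L)) := hkey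
      _ = ENNReal.ofReal (δ / N^2) := by rw [hexp]
  -- good set
  set G : Set Ω := {ω | ∀ Q₁ ∈ 𝒬, ∀ Q₂ ∈ 𝒬,
        (∫ x, (Q₁ x - Q₂ x)^2 ∂μ)
          ≤ (2 / (n : ℝ)) * ∑ i, (Q₁ (z i ω) - Q₂ (z i ω))^2 + ρ} with hGdef
  have hGmeas : MeasurableSet G := by
    have : G = ⋂ p ∈ (↑(𝒬 ×ˢ 𝒬) : Set ((Z → ℝ) × (Z → ℝ))),
        {ω | ∫ x, (p.1 x - p.2 x)^2 ∂μ
          ≤ (2 / (n : ℝ)) * ∑ i, (p.1 (z i ω) - p.2 (z i ω))^2 + ρ} := by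
      ext ω
      simp only [hGdef, Set.mem_setOf_eq, Set.mem_iInter, Finset.coe_product,
        Set.mem_prod, Finset.mem_coe, Prod.forall]
      constructor
      · rintro h a b ⟨h1, h2⟩; exact h a h1 b h2
      · intro h a h1 b h2; exact h a b ⟨h1, h2⟩
    rw [this]
    refine Set.Finite.measurableSet_biInter (Finset.finite_toSet _) fun p hp => ?_
    rw [Finset.mem_coe, Finset.mem_product] at hp
    refine measurableSet_le measurable_const ?_
    refine Measurable.add ?_ measurable_const
    refine Measurable.const_mul ?_ _
    exact Finset.measurable_sum Finset.univ fun i _ =>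
      (((h𝒬meas p.1 hp.1).comp (hmeas i)).sub ((h𝒬meas p.2 hp.2).comp (hmeas i))).pow_const 2
  have hcompl : Gᶜ ⊆ ⋃ p ∈ 𝒬 ×ˢ 𝒬, bad p := by
    intro ω hω
    simp only [hGdef, Set.mem_compl_iff, Set.mem_setOf_eq, not_forall] at hω
    obtain ⟨Q₁, h1, Q₂, h2, hlt⟩ := hω
    rw [Set.mem_iUnion₂]
    refine ⟨(Q₁, Q₂), Finset.mem_product.mpr ⟨h1, h2⟩, ?_⟩
    simp only [hbaddef, Set.mem_setOf_eq]
    exact lt_of_not_ge hlt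
  have hunion : P (⋃ p ∈ 𝒬 ×ˢ 𝒬, bad p) ≤ ENNReal.ofReal δ := by
    refine (measure_biUnion_finset_le _ _).trans ?_
    calc ∑ p ∈ 𝒬 ×ˢ 𝒬, P (bad p)
        ≤ (𝒬 ×ˢ 𝒬).card • ENNReal.ofReal (δ / N^2) :=
          Finset.sum_le_card_nsmul _ _ _ hbad_bound
      _ = ENNReal.ofReal δ := by
          rw [nsmul_eq_mul, Finset.card_product,
            ← ENNReal.ofReal_natCast, ← ENNReal.ofReal_mul (by positivity)]
          congr 1
          push_cast [← hNdef]
          field_simp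
  have hPGc : P Gᶜ ≤ ENNReal.ofReal δ := (measure_mono hcompl).trans hunion
  have hPG : ENNReal.ofReal (1 - δ) ≤ P G := by
    have h1 : P Gᶜ = 1 - P G := prob_compl_eq_one_sub hGmeas
    have h2 : P G = 1 - P Gᶜ := by
      rw [h1, ENNReal.sub_sub_cancel ENNReal.one_ne_top prob_le_one]
    rw [h2]
    calc ENNReal.ofReal (1 - δ) = 1 - ENNReal.ofReal δ := by
          rw [ENNReal.ofReal_sub _ hδ0.le, ENNReal.ofReal_one]
      _ ≤ 1 - P Gᶜ := tsub_le_tsub_left hPGc 1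
  exact hPG
end

section
/- Let Z be a set, z₁, …, z_n ∈ Z fixed points, and 𝒬 a finite nonempty set of functions Z → ℝ each bounded in absolute value by C > 0, with g ∈ 𝒬. Let ε₁, …, ε_n be independent real random variables on a probability space with E[εᵢ] = 0 and |εᵢ| ≤ C almost surely, and set yᵢ = g(zᵢ) + εᵢ. Then for any δ ∈ (0,1), with probability at least 1 − δ, every minimizer Q̂ ∈ 𝒬 of the empirical squared loss f ↦ Σ_{i=1}^n (f(zᵢ) − yᵢ)² satisfies Σ_{i=1}^n (Q̂(zᵢ) − g(zᵢ))² ≤ 8·C²·log(|𝒬|/δ). -/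
open Finset MeasureTheory ProbabilityTheory

open Real


lemma chord_exp {c t x : ℝ} (hc : 0 < c) (hx : |x| ≤ c) :
    exp (t * x) ≤ (exp (t*c) + exp (-(t*c)))/2 + x * ((exp (t*c) - exp (-(t*c)))/(2*c)) := by
  obtain ⟨hx1, hx2⟩ := abs_le.mp hx
  have ha : 0 ≤ (c - x)/(2*c) := div_nonneg (by linarith) (by linarith)
  have hb : 0 ≤ (c + x)/(2*c) := div_nonneg (by linarith) (by linarith)
  have hab : (c - x)/(2*c) + (c + x)/(2*c) = 1 := by field_simp; ring
  have h := convexOn_exp.2 (Set.mem_univ (-(t*c))) (Set.mem_univ (t*c)) ha hb hab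
  simp only [smul_eq_mul] at h
  have harg : (c - x)/(2*c) * (-(t*c)) + (c + x)/(2*c) * (t*c) = t * x := by
    field_simp
    ring
  rw [harg] at h
  calc exp (t * x) ≤ (c - x)/(2*c) * exp (-(t*c)) + (c + x)/(2*c) * exp (t*c) := h
    _ = (exp (t*c) + exp (-(t*c)))/2 + x * ((exp (t*c) - exp (-(t*c)))/(2*c)) := by
        field_simp
        ring

lemma hoeffding_mgf {Ω : Type*} [MeasurableSpace Ω] {μ : Measure Ω} [IsProbabilityMeasure μ]
    {X : Ω → ℝ} (hm : Measurable X) {c : ℝ} (hc : 0 ≤ c) (t : ℝ)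
    (hb : ∀ᵐ ω ∂μ, |X ω| ≤ c) (hmean : ∫ ω, X ω ∂μ = 0) :
    mgf X μ t ≤ exp (t^2 * c^2 / 2) := by
  rcases hc.eq_or_lt with h0 | hc
  · have h1 : mgf X μ t = 1 := by
      rw [mgf]
      have he : (fun ω => exp (t * X ω)) =ᵐ[μ] fun _ => 1 := by
        filter_upwards [hb] with ω h
        rw [← h0] at h
        have : X ω = 0 := abs_nonpos_iff.mp h
        simp [this]
      rw [integral_congr_ae he]; simp
    rw [h1]; exact one_le_exp (by positivity)
  · set α := (exp (t*c) + exp (-(t*c)))/2 with hα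
    set β := (exp (t*c) - exp (-(t*c)))/(2*c) with hβ
    have hXint : Integrable X μ := by
      refine Integrable.mono' (integrable_const c) hm.aestronglyMeasurable ?_
      filter_upwards [hb] with ω h using by rwa [Real.norm_eq_abs]
    have hint1 : Integrable (fun ω => exp (t * X ω)) μ := by
      refine Integrable.mono' (integrable_const (exp (|t| * c)))
        ((hm.const_mul t).exp).aestronglyMeasurable ?_
      filter_upwards [hb] with ω h
      rw [Real.norm_eq_abs, Real.abs_exp]
      refine exp_le_exp.mpr ((le_abs_self _).trans ?_)
      rw [abs_mul]; exact mul_le_mul_of_nonneg_left h (abs_nonneg t)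
    have h1 : mgf X μ t ≤ ∫ ω, (α + X ω * β) ∂μ := by
      refine integral_mono_ae hint1 ((integrable_const α).add (hXint.mul_const β)) ?_
      filter_upwards [hb] with ω h using chord_exp hc h
    have h2 : ∫ ω, (α + X ω * β) ∂μ = α := by
      rw [integral_add (integrable_const α) (hXint.mul_const β),
        integral_const, integral_mul_const, hmean]
      simp
    calc mgf X μ t ≤ α := h1.trans_eq h2
      _ = Real.cosh (t*c) := by rw [Real.cosh_eq]
      _ ≤ exp ((t*c)^2/2) := cosh_le_exp_half_sq _
      _ = exp (t^2*c^2/2) := by rw [mul_pow]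

lemma tail_bound {Ω : Type*} [MeasurableSpace Ω] {P : Measure Ω} [IsProbabilityMeasure P]
    {n : ℕ} {ε : Fin n → Ω → ℝ} (hmeas : ∀ i, Measurable (ε i))
    (hindep : iIndepFun ε P)
    (hmean : ∀ i, ∫ ω, ε i ω ∂P = 0)
    {C : ℝ} (hC : 0 < C) (hεbdd : ∀ i, ∀ᵐ ω ∂P, |ε i ω| ≤ C)
    (a : Fin n → ℝ) :
    (P {ω | (∑ i, (a i)^2)/2 ≤ ∑ i, a i * ε i ω}).toReal
      ≤ exp (-(∑ i, (a i)^2)/(8*C^2)) := by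
  set s := ∑ i, (a i)^2 with hs
  set t : ℝ := 1/(2*C^2) with ht
  have ht0 : 0 ≤ t := by positivity
  set Y : Fin n → Ω → ℝ := fun i ω => a i * ε i ω with hY
  have hYmeas : ∀ i, Measurable (Y i) := fun i => (hmeas i).const_mul (a i)
  have hYindep : iIndepFun Y P :=
    hindep.comp (fun i x => a i * x) (fun i => measurable_id.const_mul _)
  have hYbdd : ∀ i, ∀ᵐ ω ∂P, |Y i ω| ≤ |a i| * C := by
    intro i
    filter_upwards [hεbdd i] with ω h
    rw [hY, abs_mul]
    exact mul_le_mul_of_nonneg_left h (abs_nonneg _)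
  have hYmean : ∀ i, ∫ ω, Y i ω ∂P = 0 := by
    intro i
    simp only [hY]
    rw [integral_const_mul, hmean i, mul_zero]
  have hYint : ∀ i, Integrable (fun ω => exp (t * Y i ω)) P := by
    intro i
    refine Integrable.mono' (integrable_const (exp (|t| * (|a i| * C))))
      (((hYmeas i).const_mul t).exp).aestronglyMeasurable ?_
    filter_upwards [hYbdd i] with ω h
    rw [Real.norm_eq_abs, Real.abs_exp]
    refine exp_le_exp.mpr ((le_abs_self _).trans ?_)
    rw [abs_mul]
    exact mul_le_mul_of_nonneg_left h (abs_nonneg t)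
  have hYmgf : ∀ i, mgf (Y i) P t ≤ exp ((t^2*C^2/2) * (a i)^2) := by
    intro i
    have := hoeffding_mgf (hYmeas i) (by positivity : (0:ℝ) ≤ |a i| * C) t (hYbdd i) (hYmean i)
    refine this.trans_eq ?_
    congr 1
    rw [mul_pow, sq_abs]
    ring
  have hintsum : Integrable (fun ω => exp (t * (∑ i, Y i) ω)) P :=
    hYindep.integrable_exp_mul_sum hYmeas (fun i _ => hYint i)
  have hset : {ω | s/2 ≤ ∑ i, a i * ε i ω} = {ω | s/2 ≤ (∑ i, Y i) ω} := by
    ext ω; simp [hY]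
  rw [hset]
  calc (P {ω | s/2 ≤ (∑ i, Y i) ω}).toReal
      ≤ exp (-t * (s/2)) * mgf (∑ i, Y i) P t :=
        measure_ge_le_exp_mul_mgf (s/2) ht0 hintsum
    _ ≤ exp (-t * (s/2)) * ∏ i, exp ((t^2*C^2/2) * (a i)^2) := by
        refine mul_le_mul_of_nonneg_left ?_ (exp_nonneg _)
        rw [hYindep.mgf_sum hYmeas univ]
        exact Finset.prod_le_prod (fun i _ => mgf_nonneg) (fun i _ => hYmgf i)
    _ = exp (-t * (s/2) + (t^2*C^2/2) * s) := by
        rw [← Real.exp_sum, ← Real.exp_add, ← Finset.mul_sum, ← hs]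
    _ = exp (-s/(8*C^2)) := by
        congr 1
        rw [ht]
        field_simp
        ring


/-- least-squares error bound for a finite realizable function class with
independent zero-mean bounded noise: with probability at least `1 − δ`, every empirical
least-squares minimizer `Q̂` satisfies `Σᵢ (Q̂(zᵢ) − g(zᵢ))² ≤ 8 C² log(|𝒬|/δ)`. -/
theorem stmt19 {Ω : Type*} [MeasurableSpace Ω] (P : Measure Ω) [IsProbabilityMeasure P]
    {Z : Type*} (n : ℕ) (hn : 0 < n) (z : Fin n → Z)
    (𝒬 : Finset (Z → ℝ)) (h𝒬 : 𝒬.Nonempty)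
    (C : ℝ) (hC : 0 < C) (hbdd : ∀ f ∈ 𝒬, ∀ x, |f x| ≤ C)
    (g : Z → ℝ) (hg : g ∈ 𝒬)
    (ε : Fin n → Ω → ℝ) (hmeas : ∀ i, Measurable (ε i))
    (hindep : iIndepFun ε P)
    (hmean : ∀ i, ∫ ω, ε i ω ∂P = 0)
    (hεbdd : ∀ i, ∀ᵐ ω ∂P, |ε i ω| ≤ C)
    (δ : ℝ) (hδ0 : 0 < δ) (hδ1 : δ < 1) :
    ENNReal.ofReal (1 - δ) ≤
      P {ω | ∀ Qhat ∈ 𝒬,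
        (∀ f ∈ 𝒬, ∑ i, (Qhat (z i) - (g (z i) + ε i ω))^2
            ≤ ∑ i, (f (z i) - (g (z i) + ε i ω))^2) →
        ∑ i, (Qhat (z i) - g (z i))^2 ≤ 8 * C^2 * Real.log ((𝒬.card : ℝ) / δ)} := by
  classical
  have hcard1 : (1:ℝ) ≤ 𝒬.card := by exact_mod_cast h𝒬.card_pos
  have hcard0 : (0:ℝ) < 𝒬.card := lt_of_lt_of_le one_pos hcard1
  have hratio : 1 < (𝒬.card : ℝ) / δ := by
    rw [lt_div_iff₀ hδ0]
    nlinarith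
  have hlog : 0 < Real.log ((𝒬.card : ℝ) / δ) := Real.log_pos hratio
  set B : ℝ := 8 * C^2 * Real.log ((𝒬.card : ℝ) / δ) with hB
  have hB0 : 0 < B := by
    rw [hB]; positivity
  -- quantities
  have hXmeas : ∀ f : Z → ℝ, Measurable (fun ω => ∑ i, (f (z i) - g (z i)) * ε i ω) :=
    fun f => Finset.measurable_sum univ (fun i _ => (hmeas i).const_mul _)
  set sq : (Z → ℝ) → ℝ := fun f => ∑ i, (f (z i) - g (z i))^2 with hsq
  set X : (Z → ℝ) → Ω → ℝ := fun f ω => ∑ i, (f (z i) - g (z i)) * ε i ω with hX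
  set bad : (Z → ℝ) → Set Ω := fun f => {ω | B < sq f ∧ sq f / 2 ≤ X f ω} with hbad
  have hbadmeas : ∀ f, MeasurableSet (bad f) := by
    intro f
    by_cases h : B < sq f
    · have he : bad f = {ω | sq f / 2 ≤ X f ω} := by ext ω; simp [hbad, h]
      rw [he]
      exact measurableSet_le measurable_const (hXmeas f)
    · have he : bad f = ∅ := by ext ω; simp [hbad, h]
      rw [he]; exact MeasurableSet.empty
  have hbadP : ∀ f ∈ 𝒬, P (bad f) ≤ ENNReal.ofReal (δ / 𝒬.card) := by
    intro f hf
    by_cases h : B < sq f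
    · have hsub : bad f ⊆ {ω | sq f / 2 ≤ X f ω} := fun ω hω => hω.2
      have h1 := tail_bound hmeas hindep hmean hC hεbdd (fun i => f (z i) - g (z i))
      have h2 : Real.exp (-(sq f)/(8*C^2)) ≤ δ / 𝒬.card := by
        have hlt : Real.exp (-(sq f)/(8*C^2)) ≤ Real.exp (-B/(8*C^2)) := by
          apply Real.exp_le_exp.mpr
          apply div_le_div_of_nonneg_right ?_ (by positivity)
          · linarith
        have hBexp : Real.exp (-B/(8*C^2)) = δ / 𝒬.card := by
          have hq : -B/(8*C^2) = -Real.log ((𝒬.card : ℝ) / δ) := by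
            rw [hB]; field_simp
          rw [hq, Real.exp_neg, Real.exp_log (by linarith), inv_div]
        rw [hBexp] at hlt
        exact hlt
      have h3 : (P (bad f)).toReal ≤ δ / 𝒬.card := by
        refine le_trans (ENNReal.toReal_mono (measure_ne_top _ _) (measure_mono hsub)) ?_
        exact le_trans h1 h2
      exact (ENNReal.le_ofReal_iff_toReal_le (measure_ne_top _ _) (by positivity)).mpr h3
    · have he : bad f = ∅ := by ext ω; simp [hbad, h]
      simp [he]
  set U : Set Ω := ⋃ f ∈ 𝒬, bad f with hU
  have hUmeas : MeasurableSet U :=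
    MeasurableSet.biUnion 𝒬.countable_toSet (fun f _ => hbadmeas f)
  have hUP : P U ≤ ENNReal.ofReal δ := by
    calc P U ≤ ∑ f ∈ 𝒬, P (bad f) := measure_biUnion_finset_le 𝒬 bad
      _ ≤ ∑ f ∈ 𝒬, ENNReal.ofReal (δ / 𝒬.card) := Finset.sum_le_sum hbadP
      _ = (𝒬.card : ENNReal) * ENNReal.ofReal (δ / 𝒬.card) := by
          rw [Finset.sum_const, nsmul_eq_mul]
      _ = ENNReal.ofReal δ := by
          rw [← ENNReal.ofReal_natCast, ← ENNReal.ofReal_mul (by positivity)]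
          congr 1
          field_simp
  have hsubset : Uᶜ ⊆ {ω | ∀ Qhat ∈ 𝒬,
      (∀ f ∈ 𝒬, ∑ i, (Qhat (z i) - (g (z i) + ε i ω))^2
          ≤ ∑ i, (f (z i) - (g (z i) + ε i ω))^2) →
      ∑ i, (Qhat (z i) - g (z i))^2 ≤ 8 * C^2 * Real.log ((𝒬.card : ℝ) / δ)} := by
    intro ω hω
    simp only [Set.mem_setOf_eq]
    intro Qhat hQ hmin
    by_contra hcon
    push_neg at hcon
    have hconB : B < sq Qhat := hcon
    have key := hmin g hg
    have expand : ∑ i, (Qhat (z i) - (g (z i) + ε i ω))^2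
        = sq Qhat - 2 * X Qhat ω + ∑ i, (ε i ω)^2 := by
      rw [hsq, hX]
      simp only
      rw [Finset.mul_sum, ← Finset.sum_sub_distrib, ← Finset.sum_add_distrib]
      exact Finset.sum_congr rfl (fun i _ => by ring)
    have hg2 : ∑ i, (g (z i) - (g (z i) + ε i ω))^2 = ∑ i, (ε i ω)^2 :=
      Finset.sum_congr rfl (fun i _ => by ring)
    rw [expand, hg2] at key
    have hhalf : sq Qhat / 2 ≤ X Qhat ω := by linarith
    exact hω (Set.mem_biUnion hQ ⟨hconB, hhalf⟩)
  calc ENNReal.ofReal (1 - δ) = 1 - ENNReal.ofReal δ := by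
        rw [ENNReal.ofReal_sub _ hδ0.le, ENNReal.ofReal_one]
    _ ≤ 1 - P U := tsub_le_tsub_left hUP 1
    _ = P Uᶜ := (prob_compl_eq_one_sub hUmeas).symm
    _ ≤ P _ := measure_mono hsubset
end
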